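/- arXiv:2311.16454 — 4 statements merged into one kernel-verified Lean document; each statement's English description precedes it below -/
import Mathlib

section
/- Let T ⊆ ℝ² be a compact convex set of diameter at most h > 0, let V ⊆ T be a finite nonempty set (the vertices of the element), and let S ⊆ T be a finite set (the singular points). Let L ≥ 2 and let ω₁, …, ω_L : ℝ² → ℝ be continuous on T and differentiable at every point of T ∖ S with ‖∇ω_q(z)‖_∞ ≤ M for all z ∈ T ∖ S and all q. Let κ ≥ 2√2. Suppose that for every q ∈ {1, …, L−1} there exists a vertex v ∈ V with |ω_q(v) − ω_{q+1}(v)| > κ·h·M. Then for every q ∈ {1, …, L−1} and every k ∈ T one has |ω_q(k) − ω_{q+1}(k)| > (κ − 2√2)·h·M ≥ 0; in particular, no two adjacent functions ω_q and ω_{q+1} intersect anywhere in T. -/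
open Set Filter Topology

/-- Mean value inequality on `[a,b]` with derivative hypothesis only on the open interval;
endpoints are handled by continuity. -/
lemma lemA {g g' : ℝ → ℝ} {C a b : ℝ} (hC : 0 ≤ C) (hab : a ≤ b)
    (hg : ContinuousOn g (Set.Icc a b))
    (hd : ∀ t ∈ Set.Ioo a b, HasDerivWithinAt g (g' t) (Set.Icc a b) t)
    (hbd : ∀ t ∈ Set.Ioo a b, ‖g' t‖ ≤ C) :
    ‖g b - g a‖ ≤ C * (b - a) := by
  rcases eq_or_lt_of_le hab with rfl | hlt
  · simp
  have key : ∀ a' b', a < a' → a' ≤ b' → b' < b → ‖g b' - g a'‖ ≤ C * (b' - a') := by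
    intro a' b' ha' hab' hb'
    have hsub : Set.Icc a' b' ⊆ Set.Ioo a b := fun t ht => ⟨ha'.trans_le ht.1, ht.2.trans_lt hb'⟩
    have := norm_image_sub_le_of_norm_deriv_le_segment'
      (f := g) (f' := g') (a := a') (b := b')
      (fun t ht => (hd t (hsub ht)).mono (fun s hs => ⟨ha'.le.trans hs.1, hs.2.trans hb'.le⟩))
      (fun t ht => hbd t (hsub (Set.Ico_subset_Icc_self ht)))
    exact this b' (Set.right_mem_Icc.2 hab')
  have step1 : ∀ a' ∈ Set.Ioo a b, ‖g b - g a'‖ ≤ C * (b - a') := by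
    intro a' ha'
    haveI : (𝓝[Set.Ioo a' b] b).NeBot := right_nhdsWithin_Ioo_neBot ha'.2
    have hsub : Set.Ioo a' b ⊆ Set.Icc a b := fun t ht =>
      ⟨(ha'.1.trans ht.1).le, ht.2.le⟩
    have hcw : Filter.Tendsto g (𝓝[Set.Ioo a' b] b) (𝓝 (g b)) :=
      (hg b (Set.right_mem_Icc.2 hab)).mono hsub
    refine le_of_tendsto ((hcw.sub_const (g a')).norm) ?_
    filter_upwards [self_mem_nhdsWithin] with b' hb'
    calc ‖g b' - g a'‖ ≤ C * (b' - a') := key a' b' ha'.1 hb'.1.le hb'.2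
      _ ≤ C * (b - a') := by
          exact mul_le_mul_of_nonneg_left (by linarith [hb'.2.le]) hC
  haveI : (𝓝[Set.Ioo a b] a).NeBot := left_nhdsWithin_Ioo_neBot hlt
  have hcw : Filter.Tendsto g (𝓝[Set.Ioo a b] a) (𝓝 (g a)) :=
    (hg a (Set.left_mem_Icc.2 hab)).mono Set.Ioo_subset_Icc_self
  have htt : Filter.Tendsto (fun a' => ‖g b - g a'‖) (𝓝[Set.Ioo a b] a)
      (𝓝 ‖g b - g a‖) := ((tendsto_const_nhds.sub hcw).norm)
  have htt2 : Filter.Tendsto (fun a' => C * (b - a')) (𝓝[Set.Ioo a b] a)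
      (𝓝 (C * (b - a))) := by
    have : Filter.Tendsto (fun a' : ℝ => C * (b - a')) (𝓝 a) (𝓝 (C * (b - a))) := by
      exact (tendsto_const_nhds.sub tendsto_id).const_mul C
    exact this.mono_left nhdsWithin_le_nhds
  refine le_of_tendsto_of_tendsto htt htt2 ?_
  filter_upwards [self_mem_nhdsWithin] with a' ha'
  exact step1 a' ha'

/-- Mean value inequality allowing a finite exceptional set. -/
lemma lemB (F : Set ℝ) (hF : F.Finite) {g : ℝ → ℝ} {C : ℝ} (hC : 0 ≤ C) :
    ∀ a b : ℝ, a ≤ b → ContinuousOn g (Set.Icc a b) →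
    (∀ t ∈ Set.Ioo a b, t ∉ F → ∃ g', HasDerivWithinAt g g' (Set.Icc a b) t ∧ ‖g'‖ ≤ C) →
    ‖g b - g a‖ ≤ C * (b - a) := by
  refine Set.Finite.induction_on (motive := fun F _ => ∀ a b : ℝ, a ≤ b → ContinuousOn g (Set.Icc a b) →
      (∀ t ∈ Set.Ioo a b, t ∉ F → ∃ g', HasDerivWithinAt g g' (Set.Icc a b) t ∧ ‖g'‖ ≤ C) →
      ‖g b - g a‖ ≤ C * (b - a)) F hF ?_ ?_
  · intro a b hab hg hd
    choose! g' hd1 hd2 using fun t ht => hd t ht (Set.notMem_empty t)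
    exact lemA hC hab hg hd1 hd2
  · intro c F' _ _ ih a b hab hg hd
    by_cases hc : c ∈ Set.Ioo a b
    · have h1 : ‖g c - g a‖ ≤ C * (c - a) := by
        refine ih a c hc.1.le (hg.mono (Set.Icc_subset_Icc le_rfl hc.2.le)) ?_
        intro t ht htF
        have ht' : t ∈ Set.Ioo a b := ⟨ht.1, ht.2.trans hc.2⟩
        have : t ∉ insert c F' := by
          simp only [Set.mem_insert_iff, not_or]
          exact ⟨ne_of_lt ht.2, htF⟩
        obtain ⟨g', h1', h2'⟩ := hd t ht' this
        exact ⟨g', h1'.mono (Set.Icc_subset_Icc le_rfl hc.2.le), h2'⟩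
      have h2 : ‖g b - g c‖ ≤ C * (b - c) := by
        refine ih c b hc.2.le (hg.mono (Set.Icc_subset_Icc hc.1.le le_rfl)) ?_
        intro t ht htF
        have ht' : t ∈ Set.Ioo a b := ⟨hc.1.trans ht.1, ht.2⟩
        have : t ∉ insert c F' := by
          simp only [Set.mem_insert_iff, not_or]
          exact ⟨(ne_of_gt ht.1), htF⟩
        obtain ⟨g', h1', h2'⟩ := hd t ht' this
        exact ⟨g', h1'.mono (Set.Icc_subset_Icc hc.1.le le_rfl), h2'⟩
      calc ‖g b - g a‖ = ‖(g b - g c) + (g c - g a)‖ := by ring_nf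
        _ ≤ ‖g b - g c‖ + ‖g c - g a‖ := norm_add_le _ _
        _ ≤ C * (b - c) + C * (c - a) := add_le_add h2 h1
        _ = C * (b - a) := by ring
    · refine ih a b hab hg ?_
      intro t ht htF
      refine hd t ht ?_
      simp only [Set.mem_insert_iff, not_or]
      exact ⟨fun he => hc (he ▸ ht), htF⟩

/-- `|a| + |b| ≤ √2 · √(a² + b²)`. -/
lemma abs_add_abs_le (a b : ℝ) : |a| + |b| ≤ Real.sqrt 2 * Real.sqrt (a ^ 2 + b ^ 2) := by
  rw [← Real.sqrt_mul (by norm_num : (2:ℝ) ≥ 0)]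
  have h1 : |a| + |b| = Real.sqrt ((|a| + |b|) ^ 2) := by
    rw [Real.sqrt_sq (by positivity)]
  rw [h1]
  apply Real.sqrt_le_sqrt
  have := abs_nonneg a
  have := abs_nonneg b
  have h2 : |a| ^ 2 = a ^ 2 := sq_abs a
  have h3 : |b| ^ 2 = b ^ 2 := sq_abs b
  nlinarith [sq_nonneg (|a| - |b|)]

/-- Lipschitz-type bound on a convex set from gradient bounds off a finite set. -/
lemma lipOnT {T S : Set (EuclideanSpace ℝ (Fin 2))} (hTconv : Convex ℝ T) (hSfin : S.Finite)
    {f : EuclideanSpace ℝ (Fin 2) → ℝ}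
    {f' : EuclideanSpace ℝ (Fin 2) → (EuclideanSpace ℝ (Fin 2) →L[ℝ] ℝ)}
    {M : ℝ} (hM : 0 ≤ M)
    (hc : ContinuousOn f T)
    (hd : ∀ z ∈ T \ S, HasFDerivWithinAt f (f' z) T z)
    (hg : ∀ z ∈ T \ S, ∀ i : Fin 2, |f' z (EuclideanSpace.single i 1)| ≤ M)
    {x y : EuclideanSpace ℝ (Fin 2)} (hx : x ∈ T) (hy : y ∈ T) :
    |f y - f x| ≤ Real.sqrt 2 * M * dist y x := by
  rcases eq_or_ne x y with rfl | hxy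
  · simp
  set u : EuclideanSpace ℝ (Fin 2) := y - x with hu
  have hune : u ≠ 0 := sub_ne_zero.2 (Ne.symm hxy)
  set c : ℝ → EuclideanSpace ℝ (Fin 2) := fun t => x + t • u with hcdef
  have hcinj : Function.Injective c := by
    intro s t hst
    have h0 : x + s • u - (x + t • u) = 0 := sub_eq_zero.2 hst
    have h : (s - t) • u = 0 := by
      rw [sub_smul, show s • u - t • u = x + s • u - (x + t • u) by abel]
      exact h0
    rcases smul_eq_zero.1 h with h | h
    · exact sub_eq_zero.1 h
    · exact absurd h hune
  have hFfin : (c ⁻¹' S).Finite := hSfin.preimage hcinj.injOn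
  have hmaps : Set.MapsTo c (Set.Icc (0:ℝ) 1) T := fun t ht =>
    hTconv.add_smul_sub_mem hx hy ht
  have hcont_c : Continuous c := by
    apply continuous_const.add (continuous_id.smul continuous_const)
  have hgcont : ContinuousOn (f ∘ c) (Set.Icc (0:ℝ) 1) :=
    hc.comp hcont_c.continuousOn hmaps
  set C : ℝ := Real.sqrt 2 * M * ‖u‖ with hC
  have hC0 : 0 ≤ C := by positivity
  have key : ∀ t ∈ Set.Ioo (0:ℝ) 1, t ∉ c ⁻¹' S →
      ∃ g', HasDerivWithinAt (f ∘ c) g' (Set.Icc (0:ℝ) 1) t ∧ ‖g'‖ ≤ C := by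
    intro t ht htS
    have hzT : c t ∈ T := hmaps (Set.Ioo_subset_Icc_self ht)
    have hz : c t ∈ T \ S := ⟨hzT, htS⟩
    have hderc : HasDerivWithinAt c u (Set.Icc (0:ℝ) 1) t := by
      have : HasDerivAt c u t := by
        simpa [hcdef] using ((hasDerivAt_id t).smul_const u).const_add x
      exact this.hasDerivWithinAt
    refine ⟨f' (c t) u, (hd (c t) hz).comp_hasDerivWithinAt t hderc hmaps, ?_⟩
    -- bound |f' z u| ≤ √2 M ‖u‖
    have hdecomp : u = u 0 • EuclideanSpace.single (0 : Fin 2) (1:ℝ)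
        + u 1 • EuclideanSpace.single (1 : Fin 2) (1:ℝ) := by
      ext i
      fin_cases i <;> simp [EuclideanSpace.single_apply]
    have happ : f' (c t) u = u 0 * f' (c t) (EuclideanSpace.single 0 1)
        + u 1 * f' (c t) (EuclideanSpace.single 1 1) := by
      conv_lhs => rw [hdecomp]
      simp
    have hb0 := hg (c t) hz 0
    have hb1 := hg (c t) hz 1
    have hnorm : ‖u‖ = Real.sqrt ((u 0) ^ 2 + (u 1) ^ 2) := by
      rw [EuclideanSpace.norm_eq]
      congr 1
      rw [Fin.sum_univ_two]
      simp [sq_abs]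
    have habs : |u 0| + |u 1| ≤ Real.sqrt 2 * ‖u‖ := by
      rw [hnorm]; exact abs_add_abs_le _ _
    have : ‖f' (c t) u‖ = |f' (c t) u| := rfl
    rw [this, happ]
    calc |u 0 * f' (c t) (EuclideanSpace.single 0 1) + u 1 * f' (c t) (EuclideanSpace.single 1 1)|
        ≤ |u 0| * |f' (c t) (EuclideanSpace.single 0 1)|
          + |u 1| * |f' (c t) (EuclideanSpace.single 1 1)| := by
          refine (abs_add_le _ _).trans ?_
          rw [abs_mul, abs_mul]
      _ ≤ |u 0| * M + |u 1| * M := by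
          exact add_le_add (mul_le_mul_of_nonneg_left hb0 (abs_nonneg _))
            (mul_le_mul_of_nonneg_left hb1 (abs_nonneg _))
      _ = (|u 0| + |u 1|) * M := by ring
      _ ≤ (Real.sqrt 2 * ‖u‖) * M := mul_le_mul_of_nonneg_right habs hM
      _ = C := by rw [hC]; ring
  have := lemB (c ⁻¹' S) hFfin hC0 0 1 zero_le_one hgcont key
  have hg1 : c 1 = y := by simp [hcdef, hu]
  have hg0 : c 0 = x := by simp [hcdef]
  rw [Function.comp, Function.comp, hg1, hg0] at this
  simp only [sub_zero, mul_one] at this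
  calc |f y - f x| ≤ C := by exact_mod_cast this
    _ = Real.sqrt 2 * M * dist y x := by rw [hC, dist_eq_norm, hu]



/-- Reliability of the marking criterion (Theorem 3.3): if on an element `T` of
diameter at most `h` every pair of adjacent band functions `ω_q, ω_{q+1}` is separated
by more than `κ·h·M` at some vertex, where `κ ≥ 2√2` and `M` bounds the sup-norm of the
gradients away from the finite singular set `S`, then adjacent band functions are
separated by more than `(κ − 2√2)·h·M ≥ 0` everywhere in `T`; in particular they do
not intersect in `T`. -/
theorem stmt_2 (T : Set (EuclideanSpace ℝ (Fin 2)))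
    (hTcomp : IsCompact T) (hTconv : Convex ℝ T)
    (h : ℝ) (hh : 0 < h) (hdiam : ∀ x ∈ T, ∀ y ∈ T, dist x y ≤ h)
    (V : Set (EuclideanSpace ℝ (Fin 2))) (hVT : V ⊆ T) (hVfin : V.Finite)
    (hVne : V.Nonempty)
    (S : Set (EuclideanSpace ℝ (Fin 2))) (hST : S ⊆ T) (hSfin : S.Finite)
    (L : ℕ) (hL : 2 ≤ L) (M : ℝ) (hM : 0 ≤ M)
    (ω : ℕ → EuclideanSpace ℝ (Fin 2) → ℝ)
    (ω' : ℕ → EuclideanSpace ℝ (Fin 2) → (EuclideanSpace ℝ (Fin 2) →L[ℝ] ℝ))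
    (hcont : ∀ q, 1 ≤ q → q ≤ L → ContinuousOn (ω q) T)
    (hdiff : ∀ q, 1 ≤ q → q ≤ L → ∀ z ∈ T \ S, HasFDerivWithinAt (ω q) (ω' q z) T z)
    (hgrad : ∀ q, 1 ≤ q → q ≤ L → ∀ z ∈ T \ S, ∀ i : Fin 2,
      |ω' q z (EuclideanSpace.single i 1)| ≤ M)
    (κ : ℝ) (hκ : 2 * Real.sqrt 2 ≤ κ)
    (hsep : ∀ q, 1 ≤ q → q ≤ L - 1 → ∃ v ∈ V, κ * h * M < |ω q v - ω (q + 1) v|) :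
    ∀ q, 1 ≤ q → q ≤ L - 1 → ∀ k ∈ T,
      (κ - 2 * Real.sqrt 2) * h * M < |ω q k - ω (q + 1) k| ∧
      0 ≤ (κ - 2 * Real.sqrt 2) * h * M ∧
      ω q k ≠ ω (q + 1) k := by
  intro q hq1 hq2 k hk
  have hqL : q ≤ L := by omega
  have hq1L : q + 1 ≤ L := by omega
  have h1q1 : 1 ≤ q + 1 := by omega
  obtain ⟨v, hvV, hv⟩ := hsep q hq1 hq2
  have hvT : v ∈ T := hVT hvV
  have lip : ∀ p, 1 ≤ p → p ≤ L → |ω p v - ω p k| ≤ Real.sqrt 2 * M * h := by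
    intro p hp1 hp2
    have hl := lipOnT hTconv hSfin hM (hcont p hp1 hp2) (hdiff p hp1 hp2)
      (hgrad p hp1 hp2) hk hvT
    refine hl.trans ?_
    have hs2 : (0:ℝ) ≤ Real.sqrt 2 * M := by positivity
    exact mul_le_mul_of_nonneg_left (hdiam v hvT k hk) hs2
  have d1 := lip q hq1 hqL
  have d2 := lip (q + 1) h1q1 hq1L
  have tri : |ω q v - ω (q + 1) v| ≤
      |ω q k - ω (q + 1) k| + (|ω q v - ω q k| + |ω (q + 1) v - ω (q + 1) k|) := by
    have e : ω q v - ω (q + 1) v =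
        (ω q k - ω (q + 1) k) + ((ω q v - ω q k) - (ω (q + 1) v - ω (q + 1) k)) := by ring
    calc |ω q v - ω (q + 1) v|
        ≤ |ω q k - ω (q + 1) k| + |(ω q v - ω q k) - (ω (q + 1) v - ω (q + 1) k)| := by
          rw [e]; exact abs_add_le _ _
      _ ≤ _ := by
          have := abs_sub (ω q v - ω q k) (ω (q + 1) v - ω (q + 1) k)
          linarith
  have hκ0 : 0 ≤ (κ - 2 * Real.sqrt 2) * h * M :=
    mul_nonneg (mul_nonneg (by linarith) hh.le) hM
  have hlt : (κ - 2 * Real.sqrt 2) * h * M < |ω q k - ω (q + 1) k| := by nlinarith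
  refine ⟨hlt, hκ0, ?_⟩
  have hpos : 0 < |ω q k - ω (q + 1) k| := lt_of_le_of_lt hκ0 hlt
  exact sub_ne_zero.1 (abs_pos.1 hpos)
end

section
/- Let q : ℝ → ℝ be any function and define P(x,y) = (1/4)(1 − x − y/√3)(1 + x − y/√3)·q(x) on the reference triangle T̂. Then for every (x,y) ∈ T̂, |P(x,y)| ≤ sup_{t ∈ [−1,1]} (1/4)(1 − t²)|q(t)|. Moreover, if q is continuous, then sup_{(x,y) ∈ T̂} |P(x,y)| = sup_{t ∈ [−1,1]} (1/4)(1 − t²)|q(t)| = sup over the bottom edge {(t,0) : t ∈ [−1,1]} of |P|. -/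
/-- The reference equilateral triangle with vertices `(-1,0)`, `(1,0)`, `(0,√3)`. -/
def refTri : Set (ℝ × ℝ) :=
  {p | 0 ≤ p.2 ∧ p.2 ≤ Real.sqrt 3 * (1 + p.1) ∧ p.2 ≤ Real.sqrt 3 * (1 - p.1)}

/-- The canonical extension `P(x,y) = (1/4)(1 − x − y/√3)(1 + x − y/√3)·q(x)`. -/
noncomputable def Pext (q : ℝ → ℝ) (p : ℝ × ℝ) : ℝ :=
  (1 / 4) * (1 - p.1 - p.2 / Real.sqrt 3) * (1 + p.1 - p.2 / Real.sqrt 3) * q p.1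

lemma sqrt3_pos : (0:ℝ) < Real.sqrt 3 := Real.sqrt_pos.2 (by norm_num)

lemma mem_Icc_of_refTri {p : ℝ × ℝ} (hp : p ∈ refTri) : p.1 ∈ Set.Icc (-1:ℝ) 1 := by
  obtain ⟨h0, h1, h2⟩ := hp
  have h3 := sqrt3_pos
  constructor <;> nlinarith

lemma ptwise (q : ℝ → ℝ) {p : ℝ × ℝ} (hp : p ∈ refTri) :
    |Pext q p| ≤ (1 / 4) * (1 - p.1 ^ 2) * |q p.1| := by
  obtain ⟨h0, h1, h2⟩ := hp
  have h3 := sqrt3_pos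
  have hs0 : 0 ≤ p.2 / Real.sqrt 3 := div_nonneg h0 h3.le
  have hs1 : p.2 / Real.sqrt 3 ≤ 1 + p.1 := by rw [div_le_iff₀ h3]; nlinarith
  have hs2 : p.2 / Real.sqrt 3 ≤ 1 - p.1 := by rw [div_le_iff₀ h3]; nlinarith
  have hprod : 0 ≤ (1 - p.1 - p.2 / Real.sqrt 3) * (1 + p.1 - p.2 / Real.sqrt 3) := by
    nlinarith
  have hP : Pext q p
      = ((1 - p.1 - p.2 / Real.sqrt 3) * (1 + p.1 - p.2 / Real.sqrt 3) / 4) * q p.1 := by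
    unfold Pext; ring
  rw [hP, abs_mul, abs_of_nonneg (by linarith : (0:ℝ) ≤ (1 - p.1 - p.2 / Real.sqrt 3) * (1 + p.1 - p.2 / Real.sqrt 3) / 4)]
  have hle : (1 - p.1 - p.2 / Real.sqrt 3) * (1 + p.1 - p.2 / Real.sqrt 3) ≤ 1 - p.1 ^ 2 := by
    nlinarith
  have hq : 0 ≤ |q p.1| := abs_nonneg _
  nlinarith

lemma edge_eq (q : ℝ → ℝ) {t : ℝ} (ht : t ∈ Set.Icc (-1:ℝ) 1) :
    |Pext q (t, 0)| = (1 / 4) * (1 - t ^ 2) * |q t| := by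
  have h : Pext q (t, 0) = ((1 / 4) * (1 - t ^ 2)) * q t := by
    unfold Pext
    simp only [zero_div]
    ring
  rw [h, abs_mul, abs_of_nonneg (by nlinarith [ht.1, ht.2] : (0:ℝ) ≤ (1/4) * (1 - t ^ 2))]

lemma edge_mem {t : ℝ} (ht : t ∈ Set.Icc (-1:ℝ) 1) : ((t, 0) : ℝ × ℝ) ∈ refTri := by
  refine ⟨le_refl 0, ?_, ?_⟩ <;>
  · exact mul_nonneg sqrt3_pos.le (by linarith [ht.1, ht.2])

/-- The sup-norm of the extension `P` over the reference triangle is bounded by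
(and, for continuous `q`, equals) the sup of `(1/4)(1 − t²)|q(t)|` over `[-1,1]`,
which is the sup of `|P|` over the bottom edge. -/
theorem stmt_4 (q : ℝ → ℝ) :
    (∀ B : ℝ, (∀ t ∈ Set.Icc (-1 : ℝ) 1, (1 / 4) * (1 - t ^ 2) * |q t| ≤ B) →
      ∀ p ∈ refTri, |Pext q p| ≤ B) ∧
    (Continuous q →
      sSup ((fun p => |Pext q p|) '' refTri)
          = sSup ((fun t => (1 / 4) * (1 - t ^ 2) * |q t|) '' Set.Icc (-1 : ℝ) 1) ∧
      sSup ((fun p => |Pext q p|) '' refTri)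
          = sSup ((fun t => |Pext q (t, 0)|) '' Set.Icc (-1 : ℝ) 1)) := by
  have hmain : ∀ B : ℝ, (∀ t ∈ Set.Icc (-1 : ℝ) 1, (1 / 4) * (1 - t ^ 2) * |q t| ≤ B) →
      ∀ p ∈ refTri, |Pext q p| ≤ B := by
    intro B hB p hp
    exact le_trans (ptwise q hp) (hB _ (mem_Icc_of_refTri hp))
  refine ⟨hmain, fun hq => ?_⟩
  set g : ℝ → ℝ := fun t => (1 / 4) * (1 - t ^ 2) * |q t| with hg
  have hgc : Continuous g :=
    (continuous_const.mul (continuous_const.sub (continuous_pow 2))).mul hq.abs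
  have hbddg : BddAbove (g '' Set.Icc (-1:ℝ) 1) :=
    (isCompact_Icc.image hgc).bddAbove
  set M := sSup (g '' Set.Icc (-1:ℝ) 1) with hM
  have hub : ∀ t ∈ Set.Icc (-1:ℝ) 1, g t ≤ M := fun t ht => le_csSup hbddg ⟨t, ht, rfl⟩
  have hubP : ∀ p ∈ refTri, |Pext q p| ≤ M := hmain M hub
  have hne : ((0:ℝ), (0:ℝ)) ∈ refTri := edge_mem (by norm_num : (0:ℝ) ∈ Set.Icc (-1:ℝ) 1)
  have himg_ne : ((fun p => |Pext q p|) '' refTri).Nonempty := ⟨_, ⟨_, hne, rfl⟩⟩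
  have h1 : sSup ((fun p => |Pext q p|) '' refTri) ≤ M := by
    apply csSup_le himg_ne
    rintro x ⟨p, hp, rfl⟩
    exact hubP p hp
  have hbddP : BddAbove ((fun p => |Pext q p|) '' refTri) := by
    refine ⟨M, ?_⟩
    rintro x ⟨p, hp, rfl⟩
    exact hubP p hp
  have hsub : g '' Set.Icc (-1:ℝ) 1 ⊆ (fun p => |Pext q p|) '' refTri := by
    rintro x ⟨t, ht, rfl⟩
    exact ⟨(t, 0), edge_mem ht, by rw [hg]; exact edge_eq q ht⟩
  have h2 : M ≤ sSup ((fun p => |Pext q p|) '' refTri) :=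
    csSup_le_csSup hbddP ⟨g 0, 0, by norm_num, rfl⟩ hsub
  have heq : sSup ((fun p => |Pext q p|) '' refTri) = M := le_antisymm h1 h2
  have himg : ((fun t => |Pext q (t, 0)|) '' Set.Icc (-1:ℝ) 1) = g '' Set.Icc (-1:ℝ) 1 :=
    Set.image_congr fun t ht => edge_eq q ht
  exact ⟨heq, by rw [heq, hM, himg]⟩
end

section
/- Let m ≥ 2 and let q be a real polynomial in one variable with deg q ≤ m − 2. Define the bivariate polynomial P(x,y) = (1/4)(1 − x − y/√3)(1 + x − y/√3)·q(x), which has total degree at most m. Then, with B := sup_{t ∈ [−1,1]} (1/4)(1 − t²)|q(t)|, one has sup_{(x,y) ∈ T̂} |P(x,y)| + m^{−2} · sup_{(x,y) ∈ T̂} ‖∇P(x,y)‖ ≤ (1 + 4/√3) · B, where ‖∇P(x,y)‖ is the Euclidean norm of the gradient of P. -/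
open Polynomial Set Real

namespace Stmt5Aux

open Polynomial.Chebyshev

lemma natDegree_T_le : ∀ n : ℕ, (T ℝ (n : ℤ)).natDegree ≤ n := by
  have key : ∀ n : ℕ, (T ℝ (n : ℤ)).natDegree ≤ n ∧ (T ℝ ((n : ℤ) + 1)).natDegree ≤ n + 1 := by
    intro n
    induction n with
    | zero =>
      constructor
      · simp [T_zero]
      · simpa using (natDegree_X_le (R := ℝ)).trans_eq (by norm_num) |>.trans_eq rfl |>.trans
          (le_refl 1) |>.trans_eq rfl
    | succ k ih =>
      refine ⟨by exact_mod_cast ih.2, ?_⟩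
      have hc : ((k + 1 : ℕ) : ℤ) + 1 = (k : ℤ) + 2 := by push_cast; ring
      rw [hc, T_add_two]
      refine (natDegree_sub_le _ _).trans (max_le ?_ (ih.1.trans (by omega)))
      refine (natDegree_mul_le).trans ?_
      have h3 : (2 * X : ℝ[X]).natDegree ≤ 1 :=
        (natDegree_mul_le).trans (by simpa using natDegree_X_le)
      omega
  exact fun n => (key n).1

lemma T_eval_one (n : ℤ) : (T ℝ n).eval 1 = 1 := by
  have := T_real_cos 0 n
  simpa using this

lemma U_eval_one : ∀ k : ℕ, (U ℝ (k : ℤ)).eval 1 = (k : ℝ) + 1 := by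
  have key : ∀ k : ℕ, (U ℝ (k : ℤ)).eval 1 = (k : ℝ) + 1 ∧
      (U ℝ ((k : ℤ) + 1)).eval 1 = (k : ℝ) + 2 := by
    intro k
    induction k with
    | zero => constructor <;> simp [U_zero, U_one]
    | succ j ih =>
      refine ⟨by push_cast; exact_mod_cast ih.2, ?_⟩
      have hc : ((j + 1 : ℕ) : ℤ) + 1 = (j : ℤ) + 2 := by push_cast; ring
      rw [hc, U_add_two]
      simp only [eval_sub, eval_mul, eval_ofNat, eval_X, ih.1, ih.2]
      push_cast
      ring
  exact fun k => (key k).1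

lemma T_deriv_one (n : ℕ) (hn : 1 ≤ n) : (derivative (T ℝ (n : ℤ))).eval 1 = (n : ℝ) ^ 2 := by
  rw [T_derivative_eq_U]
  have h1 : ((n : ℤ) - 1) = ((n - 1 : ℕ) : ℤ) := by omega
  rw [h1]
  rw [eval_mul]
  rw [U_eval_one]
  have : ((n - 1 : ℕ) : ℝ) + 1 = (n : ℝ) := by
    have : (1:ℕ) ≤ n := hn
    push_cast [Nat.cast_sub this]
    ring
  rw [this]
  simp only [eval_intCast]
  push_cast
  ring

lemma T_eval_node (n k : ℕ) (hn : n ≠ 0) :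
    (T ℝ (n : ℤ)).eval (Real.cos (k * π / n)) = (-1) ^ k := by
  rw [T_real_cos]
  have hn' : (n : ℝ) ≠ 0 := Nat.cast_ne_zero.2 hn
  have h1 : ((n : ℤ) : ℝ) * (k * π / n) = k * π := by
    push_cast
    field_simp
  rw [h1]
  have := Real.cos_nat_mul_pi_sub 0 k
  simpa using this

/-- Endpoint Markov inequality, one-sided version. -/
lemma markov_endpoint (n : ℕ) (hn : 1 ≤ n) (h : ℝ[X]) (hdeg : h.natDegree ≤ n)
    (M : ℝ) (hb : ∀ t ∈ Icc (-1:ℝ) 1, |h.eval t| ≤ M) :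
    h.derivative.eval 1 ≤ (n : ℝ) ^ 2 * M := by
  by_contra hcon
  push_neg at hcon
  have hM0 : 0 ≤ M := le_trans (abs_nonneg _) (hb 1 (by norm_num))
  have hn0 : (0:ℝ) < (n : ℝ) ^ 2 := by positivity
  set δ : ℝ := (h.derivative.eval 1 - (n : ℝ) ^ 2 * M) / (2 * (n : ℝ) ^ 2) with hδ
  have hδpos : 0 < δ := div_pos (by linarith) (by positivity)
  set g : ℝ[X] := C (M + δ) * T ℝ (n : ℤ) - h with hg
  have hgdeg : g.natDegree ≤ n :=
    le_trans (natDegree_sub_le _ _)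
      (max_le ((natDegree_C_mul_le _ _).trans (natDegree_T_le n)) hdeg)
  have hg'1 : g.derivative.eval 1 < 0 := by
    rw [hg]
    simp only [derivative_sub, derivative_C_mul, eval_sub, eval_mul, eval_C]
    rw [T_deriv_one n hn]
    have : (M + δ) * (n:ℝ)^2 = (n:ℝ)^2 * M + (h.derivative.eval 1 - (n : ℝ) ^ 2 * M) / 2 := by
      rw [hδ]; field_simp
    rw [this]
    linarith
  have hg'ne : g.derivative ≠ 0 := by
    intro hz
    rw [hz] at hg'1
    simp at hg'1
  have hg1 : 0 < g.eval 1 := by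
    rw [hg]
    simp only [eval_sub, eval_mul, eval_C, T_eval_one]
    have := hb 1 (by norm_num)
    have := abs_le.1 this
    linarith [this.2]
  -- nodes
  set ξ : ℕ → ℝ := fun k => Real.cos (k * π / n) with hξ
  have hξ0 : ξ 0 = 1 := by simp [hξ]
  have hξmem : ∀ k, -1 ≤ ξ k ∧ ξ k ≤ 1 := fun k => ⟨Real.neg_one_le_cos _, Real.cos_le_one _⟩
  have hξdec : ∀ k : ℕ, k < n → ξ (k+1) < ξ k := by
    intro k hk
    apply Real.cos_lt_cos_of_nonneg_of_le_pi
    · positivity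
    · rw [div_le_iff₀ (by positivity : (0:ℝ) < (n:ℝ))]
      have : ((k:ℝ) + 1) ≤ (n : ℝ) := by exact_mod_cast hk
      have hπ : (0:ℝ) < π := Real.pi_pos
      push_cast
      nlinarith
    · have hπ : (0:ℝ) < π := Real.pi_pos
      have hnr : (0:ℝ) < (n:ℝ) := by positivity
      rw [div_lt_div_iff₀ hnr hnr]
      push_cast
      nlinarith
  have hgnode : ∀ k, k ≤ n → 0 < (-1:ℝ) ^ k * g.eval (ξ k) := by
    intro k hk
    have hTn : (T ℝ (n : ℤ)).eval (ξ k) = (-1) ^ k := T_eval_node n k (by omega)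
    have hhb : |h.eval (ξ k)| ≤ M := hb _ ⟨(hξmem k).1, (hξmem k).2⟩
    have habs := abs_le.1 hhb
    rw [hg]
    simp only [eval_sub, eval_mul, eval_C, hTn]
    rcases Nat.even_or_odd k with he | ho
    · rw [he.neg_one_pow]
      have hre : 1 * ((M + δ) * 1 - h.eval (ξ k)) = (M + δ) - h.eval (ξ k) := by ring
      rw [hre]
      linarith [habs.2]
    · rw [ho.neg_one_pow]
      have hre : (-1:ℝ) * ((M + δ) * (-1) - h.eval (ξ k)) = (M + δ) + h.eval (ξ k) := by ring
      rw [hre]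
      linarith [habs.1]
  -- roots of g between consecutive nodes
  have hgcont : Continuous fun x : ℝ => g.eval x := g.continuous
  have hroots : ∀ k : ℕ, ∃ rv : ℝ, k < n → rv ∈ Ioo (ξ (k+1)) (ξ k) ∧ g.eval rv = 0 := by
    intro k
    by_cases hk : k < n
    · rcases Nat.even_or_odd k with he | ho
      · -- g (ξ k) > 0, g (ξ (k+1)) < 0
        have h1 : 0 < g.eval (ξ k) := by
          have := hgnode k (by omega); rwa [he.neg_one_pow, one_mul] at this
        have h2 : g.eval (ξ (k+1)) < 0 := by
          have := hgnode (k+1) (by omega)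
          have ho' : Odd (k+1) := Even.add_one he
          rw [ho'.neg_one_pow, neg_one_mul, neg_pos] at this
          exact this
        have := intermediate_value_Ioo (le_of_lt (hξdec k hk))
          (hgcont.continuousOn (s := Icc (ξ (k+1)) (ξ k)))
        have hmem : (0:ℝ) ∈ Ioo (g.eval (ξ (k+1))) (g.eval (ξ k)) := ⟨h2, h1⟩
        rcases this hmem with ⟨rv, hrv1, hrv2⟩
        exact ⟨rv, fun _ => ⟨hrv1, hrv2⟩⟩
      · have h1 : g.eval (ξ k) < 0 := by
          have := hgnode k (by omega)
          rw [ho.neg_one_pow, neg_one_mul, neg_pos] at this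
          exact this
        have h2 : 0 < g.eval (ξ (k+1)) := by
          have := hgnode (k+1) (by omega)
          have he' : Even (k+1) := Odd.add_one ho
          rwa [he'.neg_one_pow, one_mul] at this
        have := intermediate_value_Ioo' (le_of_lt (hξdec k hk))
          (hgcont.continuousOn (s := Icc (ξ (k+1)) (ξ k)))
        have hmem : (0:ℝ) ∈ Ioo (g.eval (ξ k)) (g.eval (ξ (k+1))) := ⟨h1, h2⟩
        rcases this hmem with ⟨rv, hrv1, hrv2⟩
        exact ⟨rv, fun _ => ⟨hrv1, hrv2⟩⟩
    · exact ⟨0, fun hk' => absurd hk' hk⟩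
  choose r hr using hroots
  have hrmem : ∀ k, k < n → r k ∈ Ioo (ξ (k+1)) (ξ k) := fun k hk => (hr k hk).1
  have hrzero : ∀ k, k < n → g.eval (r k) = 0 := fun k hk => (hr k hk).2
  have hrgt : ∀ k, k < n → -1 < r k := by
    intro k hk
    have := (hrmem k hk).1
    have := (hξmem (k+1)).1
    linarith
  have hrdec : ∀ k, k + 1 < n → r (k+1) < r k := by
    intro k hk
    have h1 := (hrmem (k+1) hk).2
    have h2 := (hrmem k (by omega)).1
    linarith
  -- Rolle roots of g'
  have hs : ∀ k : ℕ, ∃ sv : ℝ, k + 1 < n →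
      sv ∈ Ioo (r (k+1)) (r k) ∧ g.derivative.eval sv = 0 := by
    intro k
    by_cases hk : k + 1 < n
    · have hab : r (k+1) < r k := hrdec k hk
      have heq : g.eval (r (k+1)) = g.eval (r k) := by
        rw [hrzero (k+1) hk, hrzero k (by omega)]
      rcases exists_deriv_eq_zero hab (hgcont.continuousOn) heq with ⟨c, hc1, hc2⟩
      rw [Polynomial.deriv] at hc2
      exact ⟨c, fun _ => ⟨hc1, hc2⟩⟩
    · exact ⟨0, fun hk' => absurd hk' hk⟩
  choose s hsp using hs
  -- extra root of g' in (r 0, 1)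
  have hr01 : r 0 < 1 := by
    have := (hrmem 0 (by omega)).2
    rw [hξ0] at this
    exact this
  obtain ⟨c, hc1, hc2⟩ := exists_hasDerivAt_eq_slope (fun x => g.eval x)
      (fun x => g.derivative.eval x) hr01 (hgcont.continuousOn)
      (fun x _ => g.hasDerivAt x)
  have hcpos : 0 < g.derivative.eval c := by
    rw [hc2, hrzero 0 (by omega)]
    have h10 : (0:ℝ) < 1 - r 0 := by linarith
    rw [sub_zero]
    exact div_pos hg1 h10
  have hg'cont : Continuous fun x : ℝ => g.derivative.eval x := (g.derivative).continuous
  obtain ⟨sstar, hss1, hss2⟩ : ∃ sv ∈ Ioo c 1, g.derivative.eval sv = 0 := by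
    have := intermediate_value_Ioo' (le_of_lt hc1.2) (hg'cont.continuousOn (s := Icc c 1))
    have hmem : (0:ℝ) ∈ Ioo (g.derivative.eval 1) (g.derivative.eval c) := ⟨hg'1, hcpos⟩
    rcases this hmem with ⟨sv, hsv1, hsv2⟩
    exact ⟨sv, hsv1, hsv2⟩
  have hsstar : r 0 < sstar := lt_trans hc1.1 hss1.1
  -- the decreasing enumeration of n roots of g'
  set t : ℕ → ℝ := fun j => if j = 0 then sstar else if j < n then s (j-1) else -2 - j with ht
  have hsmem : ∀ k, k + 1 < n → s k ∈ Ioo (r (k+1)) (r k) := fun k hk => (hsp k hk).1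
  have hsgt : ∀ k, k + 1 < n → -1 < s k := by
    intro k hk
    have := (hsmem k hk).1
    have := hrgt (k+1) hk
    linarith
  have htroot : ∀ j, j < n → g.derivative.eval (t j) = 0 := by
    intro j hj
    rcases Nat.eq_zero_or_pos j with h0 | hpos
    · rw [ht]; simp only [h0, if_pos rfl]; exact hss2
    · have hj0 : j ≠ 0 := by omega
      rw [ht]
      simp only [if_neg hj0, if_pos hj]
      have : (j - 1) + 1 = j := by omega
      exact (hsp (j-1) (by omega)).2
  have ht0 : t 0 = sstar := by simp [ht]
  have htj : ∀ j, j ≠ 0 → j < n → t j = s (j-1) := by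
    intro j h1 h2
    simp [ht, h1, h2]
  have htbig : ∀ j : ℕ, j ≠ 0 → ¬ j < n → t j = -2 - j := by
    intro j h1 h2
    simp [ht, h1, h2]
  have htdec : ∀ j : ℕ, t (j+1) < t j := by
    intro j
    rcases Nat.eq_zero_or_pos j with h0 | hpos
    · subst h0
      rw [ht0]
      by_cases h1 : 1 < n
      · rw [htj 1 (by omega) h1]
        have h2 := (hsmem 0 h1).2
        have : (1:ℕ) - 1 = 0 := rfl
        rw [this]
        linarith
      · rw [htbig 1 (by omega) h1]
        have : -1 < sstar := by linarith [hrgt 0 (by omega)]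
        push_cast
        linarith
    · have hj0 : j ≠ 0 := by omega
      by_cases h1 : j + 1 < n
      · rw [htj (j+1) (by omega) h1, htj j hj0 (by omega)]
        have e1 : (j + 1) - 1 = j := by omega
        rw [e1]
        have ha : s j < r j := (hsmem j h1).2
        have hb' := (hsmem (j-1) (by omega)).1
        have e2 : (j - 1) + 1 = j := by omega
        rw [e2] at hb'
        linarith
      · rw [htbig (j+1) (by omega) h1]
        by_cases h2 : j < n
        · rw [htj j hj0 h2]
          have : -1 < s (j-1) := by
            by_cases hjn : j + 1 = n
            · -- j = n - 1; s (j-1) with (j-1)+1 = j < n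
              exact hsgt (j-1) (by omega)
            · exact hsgt (j-1) (by omega)
          push_cast
          linarith
        · rw [htbig j hj0 h2]
          push_cast
          linarith
  have htanti : StrictAnti t := strictAnti_nat_of_succ_lt htdec
  have htinj : Function.Injective t := htanti.injective
  -- counting
  have hsubset : (Finset.range n).image t ⊆ g.derivative.roots.toFinset := by
    intro a ha
    rcases Finset.mem_image.1 ha with ⟨j, hj, rfl⟩
    rw [Multiset.mem_toFinset, Polynomial.mem_roots']
    exact ⟨hg'ne, htroot j (Finset.mem_range.1 hj)⟩
  have hcard : n ≤ g.derivative.roots.toFinset.card := by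
    calc n = ((Finset.range n).image t).card := by
              rw [Finset.card_image_of_injective _ htinj, Finset.card_range]
    _ ≤ _ := Finset.card_le_card hsubset
  have hcard2 : g.derivative.roots.toFinset.card ≤ g.derivative.natDegree :=
    le_trans (Multiset.toFinset_card_le _) (g.derivative.card_roots')
  have hdeg' : g.derivative.natDegree ≤ n - 1 := le_trans (natDegree_derivative_le g) (by omega)
  omega

lemma markov_endpoint_abs (n : ℕ) (hn : 1 ≤ n) (h : ℝ[X]) (hdeg : h.natDegree ≤ n)
    (M : ℝ) (hb : ∀ t ∈ Icc (-1:ℝ) 1, |h.eval t| ≤ M) :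
    |h.derivative.eval 1| ≤ (n : ℝ) ^ 2 * M := by
  rw [abs_le]
  constructor
  · have := markov_endpoint n hn (-h) (by simpa using hdeg) M (by
      intro t ht
      rw [eval_neg, abs_neg]
      exact hb t ht)
    rw [derivative_neg, eval_neg] at this
    linarith
  · exact markov_endpoint n hn h hdeg M hb

/-- Markov bound at the image of `1` under an affine map `t ↦ c + r t`. -/
lemma markov_affine (n : ℕ) (hn : 1 ≤ n) (h : ℝ[X]) (hdeg : h.natDegree ≤ n)
    (c r M : ℝ) (hr : r ≠ 0)
    (hb : ∀ t ∈ Icc (-1:ℝ) 1, |h.eval (c + r * t)| ≤ M) :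
    |r| * |h.derivative.eval (c + r)| ≤ (n : ℝ) ^ 2 * M := by
  set H : ℝ[X] := h.comp (C c + C r * X) with hH
  have hHdeg : H.natDegree ≤ n := by
    refine (natDegree_comp_le).trans ?_
    have h1 : (C c + C r * X : ℝ[X]).natDegree ≤ 1 :=
      (natDegree_add_le _ _).trans (by
        simp only [natDegree_C, max_le_iff]
        exact ⟨by omega, (natDegree_C_mul_le _ _).trans natDegree_X_le⟩)
    calc h.natDegree * (C c + C r * X : ℝ[X]).natDegree ≤ h.natDegree * 1 :=
          Nat.mul_le_mul_left _ h1
      _ ≤ n := by omega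
  have hHeval : ∀ t : ℝ, H.eval t = h.eval (c + r * t) := by
    intro t; simp [hH, eval_comp]
  have hHb : ∀ t ∈ Icc (-1:ℝ) 1, |H.eval t| ≤ M := by
    intro t ht; rw [hHeval]; exact hb t ht
  have hHder : H.derivative.eval 1 = r * h.derivative.eval (c + r) := by
    rw [hH, derivative_comp]
    simp [eval_comp]
  have := markov_endpoint_abs n hn H hHdeg M hHb
  rw [hHder, abs_mul] at this
  exact this

/-- Scaled endpoint Markov on `[a,b]`, derivative at right endpoint. -/
lemma markov_right (n : ℕ) (hn : 1 ≤ n) (h : ℝ[X]) (hdeg : h.natDegree ≤ n)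
    {a b M : ℝ} (hab : a < b) (hb : ∀ t ∈ Icc a b, |h.eval t| ≤ M) :
    (b - a) * |h.derivative.eval b| ≤ 2 * (n : ℝ) ^ 2 * M := by
  have hr : (b - a) / 2 ≠ 0 := ne_of_gt (by linarith)
  have key := markov_affine n hn h hdeg ((a+b)/2) ((b-a)/2) M hr (by
    intro t ht
    apply hb
    constructor <;> nlinarith [ht.1, ht.2])
  have he : (a+b)/2 + (b-a)/2 = b := by ring
  rw [he] at key
  have habs : |(b-a)/2| = (b-a)/2 := abs_of_pos (by linarith)
  rw [habs] at key
  linarith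
/-- Scaled endpoint Markov on `[a,b]`, derivative at left endpoint. -/
lemma markov_left (n : ℕ) (hn : 1 ≤ n) (h : ℝ[X]) (hdeg : h.natDegree ≤ n)
    {a b M : ℝ} (hab : a < b) (hb : ∀ t ∈ Icc a b, |h.eval t| ≤ M) :
    (b - a) * |h.derivative.eval a| ≤ 2 * (n : ℝ) ^ 2 * M := by
  have hr : -((b - a) / 2) ≠ 0 := ne_of_lt (by linarith)
  have key := markov_affine n hn h hdeg ((a+b)/2) (-((b-a)/2)) M hr (by
    intro t ht
    apply hb
    constructor <;> nlinarith [ht.1, ht.2])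
  have he : (a+b)/2 + -((b-a)/2) = a := by ring
  rw [he] at key
  have habs : |(-((b-a)/2))| = (b-a)/2 := by
    rw [abs_neg]; exact abs_of_pos (by linarith)
  rw [habs] at key
  linarith

section QBounds

variable {m : ℕ} {q : ℝ[X]} {B : ℝ}

/-- The boundary-trace polynomial `f = (1/4)(1-X^2) q`. -/
noncomputable def fpoly (q : ℝ[X]) : ℝ[X] := C (4:ℝ)⁻¹ * ((1 - X^2) * q)

lemma fpoly_eval (q : ℝ[X]) (t : ℝ) :
    (fpoly q).eval t = 4⁻¹ * ((1 - t^2) * q.eval t) := by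
  simp [fpoly]

lemma fpoly_deriv (q : ℝ[X]) (t : ℝ) :
    (fpoly q).derivative.eval t
      = 4⁻¹ * ((1 - t^2) * q.derivative.eval t - 2 * t * q.eval t) := by
  simp only [fpoly, derivative_C_mul, derivative_mul, derivative_sub, derivative_one,
    derivative_X_pow, derivative_C, eval_mul, eval_C, eval_sub, eval_add, eval_one, eval_pow,
    eval_X, eval_mul, eval_natCast, eval_zero]
  push_cast
  ring

lemma fpoly_deg (hm : 2 ≤ m) (hq : q.natDegree ≤ m - 2) : (fpoly q).natDegree ≤ m := by
  refine (natDegree_C_mul_le _ _).trans ?_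
  refine (natDegree_mul_le).trans ?_
  have h1 : (1 - X^2 : ℝ[X]).natDegree ≤ 2 :=
    (natDegree_sub_le _ _).trans (by simp [natDegree_X_pow])
  omega

variable (hm : 2 ≤ m) (hq : q.natDegree ≤ m - 2) (hB0 : 0 ≤ B)
    (hBB : ∀ t ∈ Icc (-1:ℝ) 1, 4⁻¹ * (1 - t^2) * |q.eval t| ≤ B)

include hBB in
lemma fpoly_bound : ∀ t ∈ Icc (-1:ℝ) 1, |(fpoly q).eval t| ≤ B := by
  intro t ht
  rw [fpoly_eval]
  have h1 : (0:ℝ) ≤ 1 - t^2 := by nlinarith [ht.1, ht.2]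
  calc |4⁻¹ * ((1 - t^2) * q.eval t)| = 4⁻¹ * (1 - t^2) * |q.eval t| := by
        rw [abs_mul, abs_mul, abs_of_nonneg h1, abs_of_nonneg (by norm_num : (0:ℝ) ≤ (4:ℝ)⁻¹)]
        ring
    _ ≤ B := hBB t ht

include hm hq hB0 hBB in
lemma fderiv_bound₁ : ∀ t ∈ Icc (-1:ℝ) 1,
    (1 + t) * |(fpoly q).derivative.eval t| ≤ 2 * (m:ℝ)^2 * B := by
  intro t ht
  rcases eq_or_lt_of_le ht.1 with he | hlt
  · rw [← he, (by norm_num : (1:ℝ) + (-1) = 0), zero_mul]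
    positivity
  · have key := markov_right m (by omega) (fpoly q) (fpoly_deg hm hq) hlt
      (fun u hu => fpoly_bound hBB u ⟨hu.1, le_trans hu.2 ht.2⟩)
    have : t - -1 = 1 + t := by ring
    rw [this] at key
    linarith

include hm hq hB0 hBB in
lemma fderiv_bound₂ : ∀ t ∈ Icc (-1:ℝ) 1,
    (1 - t) * |(fpoly q).derivative.eval t| ≤ 2 * (m:ℝ)^2 * B := by
  intro t ht
  rcases eq_or_lt_of_le ht.2 with he | hlt
  · rw [he]
    norm_num
    positivity
  · have key := markov_left m (by omega) (fpoly q) (fpoly_deg hm hq) hlt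
      (fun u hu => fpoly_bound hBB u ⟨le_trans ht.1 hu.1, hu.2⟩)
    linarith

include hm hq hB0 hBB in
lemma qbound₁ : ∀ t ∈ Icc (0:ℝ) 1, (1 + t)^2 * |q.eval t| ≤ 8 * (m:ℝ)^2 * B := by
  intro t ht
  rcases eq_or_lt_of_le ht.2 with he | hlt
  · subst he
    have h1 : (fpoly q).derivative.eval 1 = -(q.eval 1 / 2) := by
      rw [fpoly_deriv]; ring_nf
    have h2 := fderiv_bound₂ hm hq hB0 hBB 1 (by norm_num)
    have h3 := fderiv_bound₁ hm hq hB0 hBB 1 (by norm_num)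
    rw [h1] at h3
    rw [abs_neg, abs_div] at h3
    have h4 : |(2:ℝ)| = 2 := by norm_num
    rw [h4] at h3
    have : |q.eval 1| ≤ 2 * (m:ℝ)^2 * B := by linarith
    nlinarith
  · -- MVT on [t, 1]
    have hcont : ContinuousOn (fun x : ℝ => (fpoly q).eval x) (Icc t 1) :=
      (fpoly q).continuous.continuousOn
    obtain ⟨c, hc1, hc2⟩ := exists_hasDerivAt_eq_slope (fun x => (fpoly q).eval x)
      (fun x => (fpoly q).derivative.eval x) hlt hcont
      (fun x _ => (fpoly q).hasDerivAt x)
    have hf1 : (fpoly q).eval 1 = 0 := by rw [fpoly_eval]; norm_num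
    rw [hf1] at hc2
    -- f t = -(1-t) f'(c)
    have hft : (fpoly q).eval t = -(1 - t) * (fpoly q).derivative.eval c := by
      have h1t : (1:ℝ) - t ≠ 0 := ne_of_gt (by linarith)
      rw [eq_div_iff h1t] at hc2
      linear_combination hc2
    -- (1+t) q t = -4 f'(c)
    have hkey : (1 + t) * q.eval t = -4 * (fpoly q).derivative.eval c := by
      have e1 : 4 * (fpoly q).eval t = (1 - t^2) * q.eval t := by
        rw [fpoly_eval]; ring
      have h1t : (1:ℝ) - t ≠ 0 := ne_of_gt (by linarith)
      apply mul_left_cancel₀ h1t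
      rw [hft] at e1
      nlinarith [e1]
    have hA := fderiv_bound₁ hm hq hB0 hBB c ⟨by linarith [hc1.1, ht.1], by linarith [hc1.2]⟩
    have habs : (1 + t) * |q.eval t| = 4 * |(fpoly q).derivative.eval c| := by
      have := congrArg abs hkey
      rw [abs_mul, abs_mul] at this
      rw [abs_of_nonneg (by linarith [ht.1] : (0:ℝ) ≤ 1 + t)] at this
      rw [(by norm_num : |(-4:ℝ)| = 4)] at this
      exact this
    have h1c : 1 + t ≤ 1 + c := by linarith [hc1.1]
    have hAnn : 0 ≤ |(fpoly q).derivative.eval c| := abs_nonneg _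
    have : (1 + t)^2 * |q.eval t| = (1 + t) * ((1+t) * |q.eval t|) := by ring
    rw [this, habs]
    nlinarith [ht.1]

include hm hq hB0 hBB in
lemma qbound₂ : ∀ t ∈ Icc (-1:ℝ) 0, (1 - t)^2 * |q.eval t| ≤ 8 * (m:ℝ)^2 * B := by
  intro t ht
  rcases eq_or_lt_of_le ht.1 with he | hlt
  · rw [← he]
    have h1 : (fpoly q).derivative.eval (-1) = q.eval (-1) / 2 := by
      rw [fpoly_deriv]; ring_nf
    have h2 := fderiv_bound₂ hm hq hB0 hBB (-1) (by norm_num)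
    rw [h1, abs_div, (by norm_num : |(2:ℝ)| = 2)] at h2
    have : |q.eval (-1)| ≤ 2 * (m:ℝ)^2 * B := by linarith
    nlinarith
  · have hcont : ContinuousOn (fun x : ℝ => (fpoly q).eval x) (Icc (-1) t) :=
      (fpoly q).continuous.continuousOn
    obtain ⟨c, hc1, hc2⟩ := exists_hasDerivAt_eq_slope (fun x => (fpoly q).eval x)
      (fun x => (fpoly q).derivative.eval x) hlt hcont
      (fun x _ => (fpoly q).hasDerivAt x)
    have hf1 : (fpoly q).eval (-1) = 0 := by rw [fpoly_eval]; norm_num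
    rw [hf1] at hc2
    have hft : (fpoly q).eval t = (1 + t) * (fpoly q).derivative.eval c := by
      have h1t : t - (-1) ≠ 0 := ne_of_gt (by linarith)
      rw [eq_div_iff h1t] at hc2
      linear_combination -hc2
    have hkey : (1 - t) * q.eval t = 4 * (fpoly q).derivative.eval c := by
      have e1 : 4 * (fpoly q).eval t = (1 - t^2) * q.eval t := by
        rw [fpoly_eval]; ring
      have h1t : (1:ℝ) + t ≠ 0 := ne_of_gt (by linarith)
      apply mul_left_cancel₀ h1t
      rw [hft] at e1
      nlinarith [e1]
    have hA := fderiv_bound₂ hm hq hB0 hBB c ⟨by linarith [hc1.1], by linarith [hc1.2, ht.2]⟩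
    have habs : (1 - t) * |q.eval t| = 4 * |(fpoly q).derivative.eval c| := by
      have := congrArg abs hkey
      rw [abs_mul, abs_mul] at this
      rw [abs_of_nonneg (by linarith [ht.2] : (0:ℝ) ≤ 1 - t)] at this
      rw [(by norm_num : |(4:ℝ)| = 4)] at this
      exact this
    have h1c : 1 - t ≤ 1 - c := by linarith [hc1.2]
    have hAnn : 0 ≤ |(fpoly q).derivative.eval c| := abs_nonneg _
    have : (1 - t)^2 * |q.eval t| = (1 - t) * ((1 - t) * |q.eval t|) := by ring
    rw [this, habs]
    nlinarith [ht.2]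

end QBounds

/-- The horizontal-slice polynomial `g_σ = (1/4)(σ² - X²) q`. -/
noncomputable def gpoly (σ : ℝ) (q : ℝ[X]) : ℝ[X] := C (4:ℝ)⁻¹ * ((C (σ^2) - X^2) * q)

lemma gpoly_eval (σ : ℝ) (q : ℝ[X]) (t : ℝ) :
    (gpoly σ q).eval t = 4⁻¹ * ((σ^2 - t^2) * q.eval t) := by
  simp [gpoly]

lemma gpoly_deriv (σ : ℝ) (q : ℝ[X]) (t : ℝ) :
    (gpoly σ q).derivative.eval t
      = 4⁻¹ * ((σ^2 - t^2) * q.derivative.eval t - 2 * t * q.eval t) := by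
  simp only [gpoly, derivative_C_mul, derivative_mul, derivative_sub, derivative_C,
    derivative_X_pow, eval_mul, eval_C, eval_sub, eval_add, eval_one, eval_pow, eval_X,
    eval_natCast, eval_zero]
  push_cast
  ring

lemma gpoly_deg {m : ℕ} {q : ℝ[X]} (hm : 2 ≤ m) (hq : q.natDegree ≤ m - 2) (σ : ℝ) :
    (gpoly σ q).natDegree ≤ m := by
  refine (natDegree_C_mul_le _ _).trans ((natDegree_mul_le).trans ?_)
  have h1 : (C (σ^2) - X^2 : ℝ[X]).natDegree ≤ 2 :=
    (natDegree_sub_le _ _).trans (by simp [natDegree_X_pow, natDegree_C])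
  omega

section Grad

variable {m : ℕ} {q : ℝ[X]} {B : ℝ}

/-- Pointwise bound for the horizontal derivative on the triangle. -/
lemma Dx_bound (hm : 2 ≤ m) (hq : q.natDegree ≤ m - 2) (hB0 : 0 ≤ B)
    (hBB : ∀ t ∈ Icc (-1:ℝ) 1, 4⁻¹ * (1 - t^2) * |q.eval t| ≤ B)
    {x σ : ℝ} (hσ1 : σ ≤ 1) (hx1 : -σ ≤ x) (hx2 : x ≤ σ) :
    |(gpoly σ q).derivative.eval x| ≤ 2 * (m:ℝ)^2 * B := by
  have hσ0 : 0 ≤ σ := by linarith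
  rcases eq_or_lt_of_le hσ0 with he | hσpos
  · -- σ = 0, so x = 0 and the derivative vanishes
    have hx0 : x = 0 := by linarith
    rw [gpoly_deriv, hx0, ← he]
    norm_num
    positivity
  · have hchord : ∀ t ∈ Icc (-σ) σ, |(gpoly σ q).eval t| ≤ σ^2 * B := by
      intro t ht
      have ht1 : -1 ≤ t := by linarith [ht.1]
      have ht2 : t ≤ 1 := by linarith [ht.2]
      have hnn : (0:ℝ) ≤ σ^2 - t^2 := by nlinarith [ht.1, ht.2]
      rw [gpoly_eval]
      have e : |4⁻¹ * ((σ^2 - t^2) * q.eval t)| = 4⁻¹ * (σ^2 - t^2) * |q.eval t| := by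
        rw [abs_mul, abs_mul, abs_of_nonneg hnn,
          abs_of_nonneg (by norm_num : (0:ℝ) ≤ (4:ℝ)⁻¹)]
        ring
      rw [e]
      have hcomp : (σ^2 - t^2) ≤ σ^2 * (1 - t^2) := by
        nlinarith [mul_nonneg (sq_nonneg t) (by nlinarith : (0:ℝ) ≤ 1 - σ^2)]
      have hqt := hBB t ⟨ht1, ht2⟩
      have habs : (0:ℝ) ≤ |q.eval t| := abs_nonneg _
      nlinarith [hqt, habs, sq_nonneg σ]
    rcases le_or_gt 0 x with hx0 | hx0
    · -- right-endpoint Markov on [-σ, x]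
      have hab : -σ < x := by linarith
      have key := markov_right m (by omega) (gpoly σ q) (gpoly_deg hm hq σ) hab
        (fun t ht => hchord t ⟨ht.1, le_trans ht.2 hx2⟩)
      have hD0 : (0:ℝ) ≤ |(gpoly σ q).derivative.eval x| := abs_nonneg _
      have hK : (0:ℝ) ≤ 2 * (m:ℝ)^2 * B := by positivity
      have h1 : (0:ℝ) ≤ x * |(gpoly σ q).derivative.eval x| := mul_nonneg hx0 hD0
      have h2 : (0:ℝ) ≤ 2 * (m:ℝ)^2 * B * (σ * (1 - σ)) :=
        mul_nonneg hK (mul_nonneg hσ0 (by linarith))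
      nlinarith [key, h1, h2, hσpos]
    · have hab : x < σ := by linarith
      have key := markov_left m (by omega) (gpoly σ q) (gpoly_deg hm hq σ) hab
        (fun t ht => hchord t ⟨le_trans hx1 ht.1, ht.2⟩)
      have hD0 : (0:ℝ) ≤ |(gpoly σ q).derivative.eval x| := abs_nonneg _
      have hK : (0:ℝ) ≤ 2 * (m:ℝ)^2 * B := by positivity
      have h1 : (0:ℝ) ≤ (-x) * |(gpoly σ q).derivative.eval x| :=
        mul_nonneg (by linarith) hD0
      have h2 : (0:ℝ) ≤ 2 * (m:ℝ)^2 * B * (σ * (1 - σ)) :=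
        mul_nonneg hK (mul_nonneg hσ0 (by linarith))
      nlinarith [key, h1, h2, hσpos]

/-- Pointwise bound for `σ |q(x)|` on the triangle. -/
lemma sigq_bound (hm : 2 ≤ m) (hq : q.natDegree ≤ m - 2) (hB0 : 0 ≤ B)
    (hBB : ∀ t ∈ Icc (-1:ℝ) 1, 4⁻¹ * (1 - t^2) * |q.eval t| ≤ B)
    (hq1 : ∀ t ∈ Icc (0:ℝ) 1, (1 + t)^2 * |q.eval t| ≤ 8 * (m:ℝ)^2 * B)
    (hq2 : ∀ t ∈ Icc (-1:ℝ) 0, (1 - t)^2 * |q.eval t| ≤ 8 * (m:ℝ)^2 * B)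
    {x σ : ℝ} (hσ1 : σ ≤ 1) (hx1 : -σ ≤ x) (hx2 : x ≤ σ) :
    σ * |q.eval x| ≤ 81/32 * ((m:ℝ)^2 * B) := by
  have hσ0 : 0 ≤ σ := by linarith
  have hx1' : -1 ≤ x := by linarith
  have hx2' : x ≤ 1 := by linarith
  have habs : (0:ℝ) ≤ |q.eval x| := abs_nonneg _
  have hm4 : (4:ℝ) ≤ (m:ℝ)^2 := by
    have : (2:ℝ) ≤ (m:ℝ) := by exact_mod_cast hm
    nlinarith
  rcases le_or_gt (7/9 : ℝ) x with h79 | h79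
  · -- x ≥ 7/9
    have hk := hq1 x ⟨by linarith, hx2'⟩
    have h16 : (16/9:ℝ)^2 ≤ (1+x)^2 := by nlinarith
    -- |q x| ≤ 8 m² B / (1+x)² ≤ 8 m² B (81/256)
    have : |q.eval x| ≤ 81/32 * ((m:ℝ)^2*B) := by nlinarith
    nlinarith
  rcases le_or_gt x (-(7/9) : ℝ) with h79' | h79'
  · have hk := hq2 x ⟨hx1', by linarith⟩
    have h16 : (16/9:ℝ)^2 ≤ (1-x)^2 := by nlinarith
    have : |q.eval x| ≤ 81/32 * ((m:ℝ)^2*B) := by nlinarith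
    nlinarith
  · -- |x| ≤ 7/9
    have hk := hBB x ⟨hx1', hx2'⟩
    have h32 : (32/81:ℝ) ≤ 1 - x^2 := by nlinarith
    have : |q.eval x| ≤ 81/8 * B := by nlinarith
    nlinarith

end Grad

end Stmt5Aux

open Stmt5Aux

set_option maxHeartbeats 1000000

/-- Stability of the polynomial extension operator (Theorem 5.3, boundary datum
vanishing on the two slanted edges): for `m ≥ 2` and a univariate polynomial `q`
of degree at most `m − 2`, the extension
`P(x,y) = (1/4)(1 − x − y/√3)(1 + x − y/√3)·q(x)` satisfies
`‖P‖_{∞,T̂} + m⁻² ‖∇P‖_{∞,T̂} ≤ (1 + 4/√3) · sup_{t∈[−1,1]} (1/4)(1−t²)|q(t)|`,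
where `‖∇P‖` denotes the Euclidean norm of the gradient of `P`. -/
theorem stmt_5 (m : ℕ) (hm : 2 ≤ m)
    (q : Polynomial ℝ) (hq : q.natDegree ≤ m - 2)
    (P : ℝ × ℝ → ℝ)
    (hP : ∀ p : ℝ × ℝ, P p =
      (1 / 4) * (1 - p.1 - p.2 / Real.sqrt 3) * (1 + p.1 - p.2 / Real.sqrt 3)
        * q.eval p.1)
    (B : ℝ)
    (hB : B = sSup ((fun t => (1 / 4) * (1 - t ^ 2) * |q.eval t|) '' Set.Icc (-1 : ℝ) 1)) :
    sSup ((fun p => |P p|) '' refTri)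
      + ((m : ℝ) ^ 2)⁻¹ * sSup ((fun p =>
          Real.sqrt ((fderiv ℝ P p (1, 0)) ^ 2 + (fderiv ℝ P p (0, 1)) ^ 2)) '' refTri)
      ≤ (1 + 4 / Real.sqrt 3) * B := by
  have hs3 : (0:ℝ) < Real.sqrt 3 := Real.sqrt_pos.2 (by norm_num)
  have hs3sq : Real.sqrt 3 * Real.sqrt 3 = 3 := Real.mul_self_sqrt (by norm_num)
  -- B facts
  have hcont : Continuous fun t : ℝ => (1/4:ℝ) * (1 - t^2) * |q.eval t| := by
    exact ((continuous_const.mul (continuous_const.sub (continuous_pow 2))).mul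
      (q.continuous.abs))
  have hbdd : BddAbove ((fun t : ℝ => (1/4:ℝ) * (1 - t^2) * |q.eval t|) '' Icc (-1:ℝ) 1) :=
    (isCompact_Icc.image hcont).bddAbove
  have hBB : ∀ t ∈ Icc (-1:ℝ) 1, 4⁻¹ * (1 - t^2) * |q.eval t| ≤ B := by
    intro t ht
    have h := le_csSup hbdd (Set.mem_image_of_mem _ ht)
    rw [← hB] at h
    norm_num at h ⊢
    convert h using 2
  have hB0 : 0 ≤ B := by
    have h := le_csSup hbdd (Set.mem_image_of_mem _ (by norm_num : (0:ℝ) ∈ Icc (-1:ℝ) 1))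
    rw [← hB] at h
    have h2 : (0:ℝ) ≤ (1/4:ℝ) * (1 - (0:ℝ)^2) * |q.eval 0| := by positivity
    linarith
  -- differentiability
  have hPfun : P = fun p : ℝ×ℝ => (1/4:ℝ) * (1 - p.1 - p.2 / Real.sqrt 3)
      * (1 + p.1 - p.2 / Real.sqrt 3) * q.eval p.1 := funext hP
  have hPdiff : Differentiable ℝ P := by
    rw [hPfun]
    have hsnd : Differentiable ℝ fun p : ℝ×ℝ => p.2 := differentiable_snd
    have hdiv : Differentiable ℝ fun p : ℝ×ℝ => p.2 / Real.sqrt 3 := by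
      simp only [div_eq_mul_inv]
      exact hsnd.mul_const _
    have h1 : Differentiable ℝ fun p : ℝ×ℝ => (1:ℝ) - p.1 - p.2 / Real.sqrt 3 :=
      ((differentiable_const _).sub differentiable_fst).sub hdiv
    have h2 : Differentiable ℝ fun p : ℝ×ℝ => (1:ℝ) + p.1 - p.2 / Real.sqrt 3 :=
      ((differentiable_const _).add differentiable_fst).sub hdiv
    have h3 : Differentiable ℝ fun p : ℝ×ℝ => q.eval p.1 :=
      q.differentiable.comp differentiable_fst
    exact (((h1.const_mul _).mul h2).mul h3)
  -- pointwise bounds on the triangle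
  have key : ∀ p ∈ refTri, |P p| ≤ B ∧
      Real.sqrt ((fderiv ℝ P p (1, 0)) ^ 2 + (fderiv ℝ P p (0, 1)) ^ 2)
        ≤ 4 / Real.sqrt 3 * ((m:ℝ)^2 * B) := by
    rintro ⟨x, y⟩ ⟨hy0, hy1, hy2⟩
    simp only at hy0 hy1 hy2
    obtain ⟨σ, hσdef⟩ : ∃ σ : ℝ, σ = 1 - y / Real.sqrt 3 := ⟨_, rfl⟩
    have hs0 : 0 ≤ y / Real.sqrt 3 := by positivity
    have hσ1 : σ ≤ 1 := by rw [hσdef]; linarith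
    have hxσ1 : -σ ≤ x := by
      rw [hσdef]
      have : y / Real.sqrt 3 ≤ 1 + x := by
        rw [div_le_iff₀ hs3]; nlinarith [hy1]
      linarith
    have hxσ2 : x ≤ σ := by
      rw [hσdef]
      have : y / Real.sqrt 3 ≤ 1 - x := by
        rw [div_le_iff₀ hs3]; nlinarith [hy2]
      linarith
    have hσ0 : 0 ≤ σ := by linarith
    have hx1 : -1 ≤ x := by linarith
    have hx2 : x ≤ 1 := by linarith
    -- value bound
    have hPp : P (x, y) = 4⁻¹ * ((σ^2 - x^2) * q.eval x) := by
      rw [hP]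
      simp only
      rw [hσdef]
      ring
    have hval : |P (x, y)| ≤ B := by
      rw [hPp]
      have hnn : (0:ℝ) ≤ σ^2 - x^2 := by nlinarith
      have e : |4⁻¹ * ((σ^2 - x^2) * q.eval x)| = 4⁻¹ * (σ^2 - x^2) * |q.eval x| := by
        rw [abs_mul, abs_mul, abs_of_nonneg hnn,
          abs_of_nonneg (by norm_num : (0:ℝ) ≤ (4:ℝ)⁻¹)]
        ring
      rw [e]
      have hcomp : (σ^2 - x^2) ≤ 1 - x^2 := by nlinarith
      have hqt := hBB x ⟨hx1, hx2⟩
      have habs : (0:ℝ) ≤ |q.eval x| := abs_nonneg _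
      nlinarith [mul_le_mul_of_nonneg_right hcomp habs]
    refine ⟨hval, ?_⟩
    -- derivative computations
    have hD := (hPdiff (x, y)).hasFDerivAt
    -- horizontal
    have hcompX : HasDerivAt (fun t : ℝ => P (t, y)) (fderiv ℝ P (x, y) (1, 0)) x := by
      have hcurve : HasDerivAt (fun t : ℝ => ((t, y) : ℝ × ℝ)) ((1:ℝ), (0:ℝ)) x :=
        (hasDerivAt_id x).prodMk (hasDerivAt_const x y)
      have := hD.comp_hasDerivAt x hcurve
      simpa [Function.comp_def] using this
    have hx1' : HasDerivAt (fun t : ℝ => P (t, y))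
        ((((1/4:ℝ) * (0 - 1 - 0)) * (1 + x - y/Real.sqrt 3)
          + ((1/4:ℝ) * (1 - x - y/Real.sqrt 3)) * (0 + 1 - 0)) * q.eval x
          + ((1/4:ℝ) * (1 - x - y/Real.sqrt 3) * (1 + x - y/Real.sqrt 3))
            * q.derivative.eval x) x := by
      simp only [hP]
      have hA : HasDerivAt (fun t : ℝ => 1 - t - y/Real.sqrt 3) (0 - 1 - 0) x :=
        ((hasDerivAt_const x (1:ℝ)).sub (hasDerivAt_id x)).sub
          (hasDerivAt_const x (y/Real.sqrt 3))
      have hBd : HasDerivAt (fun t : ℝ => 1 + t - y/Real.sqrt 3) (0 + 1 - 0) x :=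
        ((hasDerivAt_const x (1:ℝ)).add (hasDerivAt_id x)).sub
          (hasDerivAt_const x (y/Real.sqrt 3))
      exact ((hA.const_mul (1/4:ℝ)).mul hBd).mul (q.hasDerivAt x)
    have hDx : fderiv ℝ P (x, y) (1, 0) = (gpoly σ q).derivative.eval x := by
      rw [hcompX.unique hx1', gpoly_deriv, hσdef]
      ring
    -- vertical
    have hcompY : HasDerivAt (fun t : ℝ => P (x, t)) (fderiv ℝ P (x, y) (0, 1)) y := by
      have hcurve : HasDerivAt (fun t : ℝ => ((x, t) : ℝ × ℝ)) ((0:ℝ), (1:ℝ)) y :=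
        (hasDerivAt_const y x).prodMk (hasDerivAt_id y)
      have := hD.comp_hasDerivAt y hcurve
      simpa [Function.comp_def] using this
    have hy1' : HasDerivAt (fun t : ℝ => P (x, t))
        ((((1/4:ℝ) * (0 - 1/Real.sqrt 3)) * (1 + x - y/Real.sqrt 3)
          + ((1/4:ℝ) * (1 - x - y/Real.sqrt 3)) * (0 - 1/Real.sqrt 3)) * q.eval x) y := by
      simp only [hP]
      have hA : HasDerivAt (fun t : ℝ => 1 - x - t/Real.sqrt 3) (0 - 1/Real.sqrt 3) y := by
        have := (hasDerivAt_const y ((1:ℝ) - x)).sub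
          ((hasDerivAt_id y).div_const (Real.sqrt 3))
        simpa [Pi.sub_def] using this
      have hBd : HasDerivAt (fun t : ℝ => 1 + x - t/Real.sqrt 3) (0 - 1/Real.sqrt 3) y := by
        have := (hasDerivAt_const y ((1:ℝ) + x)).sub
          ((hasDerivAt_id y).div_const (Real.sqrt 3))
        simpa [Pi.sub_def] using this
      exact ((hA.const_mul (1/4:ℝ)).mul hBd).mul_const (q.eval x)
    have hDy : fderiv ℝ P (x, y) (0, 1) * (2 * Real.sqrt 3) = -(σ * q.eval x) := by
      rw [hcompY.unique hy1', hσdef]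
      field_simp
      ring
    -- bounds
    have hDxb : |fderiv ℝ P (x, y) (1, 0)| ≤ 2 * (m:ℝ)^2 * B := by
      rw [hDx]
      exact Dx_bound hm hq hB0 hBB hσ1 hxσ1 hxσ2
    have hsq : σ * |q.eval x| ≤ 81/32 * ((m:ℝ)^2 * B) :=
      sigq_bound hm hq hB0 hBB (qbound₁ hm hq hB0 hBB) (qbound₂ hm hq hB0 hBB) hσ1 hxσ1 hxσ2
    obtain ⟨K, hK⟩ : ∃ K : ℝ, K = (m:ℝ)^2 * B := ⟨_, rfl⟩
    have hK0 : 0 ≤ K := by rw [hK]; positivity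
    have hDy2 : (fderiv ℝ P (x, y) (0, 1))^2 * 12 = (σ * q.eval x)^2 := by
      have h12 : (2 * Real.sqrt 3)^2 = 12 := by
        rw [mul_pow]
        rw [Real.sq_sqrt (by norm_num : (0:ℝ) ≤ 3)]
        norm_num
      calc (fderiv ℝ P (x, y) (0, 1))^2 * 12
          = (fderiv ℝ P (x, y) (0, 1) * (2 * Real.sqrt 3))^2 := by rw [mul_pow, h12]
        _ = (-(σ * q.eval x))^2 := by rw [hDy]
        _ = (σ * q.eval x)^2 := by ring
    have hsum : (fderiv ℝ P (x, y) (1, 0))^2 + (fderiv ℝ P (x, y) (0, 1))^2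
        ≤ (4 / Real.sqrt 3 * K)^2 := by
      have h1 : (fderiv ℝ P (x, y) (1, 0))^2 ≤ (2 * K)^2 := by
        have := abs_nonneg (fderiv ℝ P (x, y) (1, 0))
        have h2K : (2:ℝ) * (m:ℝ)^2 * B = 2 * K := by rw [hK]; ring
        rw [h2K] at hDxb
        nlinarith [sq_abs (fderiv ℝ P (x, y) (1, 0))]
      have h2 : (fderiv ℝ P (x, y) (0, 1))^2 * 12 ≤ (81/32 * K)^2 := by
        rw [hDy2]
        have ha : |σ * q.eval x| = σ * |q.eval x| := by
          rw [abs_mul, abs_of_nonneg hσ0]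
        nlinarith [sq_abs (σ * q.eval x), abs_nonneg (σ * q.eval x), hsq, hK0]
      have hrhs : (4 / Real.sqrt 3 * K)^2 = 16/3 * K^2 := by
        rw [mul_pow, div_pow]
        rw [Real.sq_sqrt (by norm_num : (0:ℝ) ≤ 3)]
        ring
      rw [hrhs]
      nlinarith [h1, h2, sq_nonneg K]
    rw [← hK]
    calc Real.sqrt ((fderiv ℝ P (x, y) (1, 0))^2 + (fderiv ℝ P (x, y) (0, 1))^2)
        ≤ Real.sqrt ((4 / Real.sqrt 3 * K)^2) := Real.sqrt_le_sqrt hsum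
      _ = 4 / Real.sqrt 3 * K := Real.sqrt_sq (by positivity)
  -- assemble
  have h1 : sSup ((fun p => |P p|) '' refTri) ≤ B := by
    apply Real.sSup_le _ hB0
    rintro z ⟨p, hp, rfl⟩
    exact (key p hp).1
  have h2 : sSup ((fun p => Real.sqrt ((fderiv ℝ P p (1, 0)) ^ 2
      + (fderiv ℝ P p (0, 1)) ^ 2)) '' refTri) ≤ 4 / Real.sqrt 3 * ((m:ℝ)^2 * B) := by
    apply Real.sSup_le _ (by positivity)
    rintro z ⟨p, hp, rfl⟩
    exact (key p hp).2
  have hm2 : (0:ℝ) < (m:ℝ)^2 := by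
    have : (2:ℝ) ≤ (m:ℝ) := by exact_mod_cast hm
    positivity
  have h3 : ((m:ℝ)^2)⁻¹ * sSup ((fun p => Real.sqrt ((fderiv ℝ P p (1, 0)) ^ 2
      + (fderiv ℝ P p (0, 1)) ^ 2)) '' refTri) ≤ 4 / Real.sqrt 3 * B := by
    have := mul_le_mul_of_nonneg_left h2 (le_of_lt (inv_pos.2 hm2))
    calc ((m:ℝ)^2)⁻¹ * sSup _ ≤ ((m:ℝ)^2)⁻¹ * (4 / Real.sqrt 3 * ((m:ℝ)^2 * B)) := this
      _ = 4 / Real.sqrt 3 * B := by field_simp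
  linarith [h1, h3]
end

section
/- Let m, m₁, m₂, m₃ be integers with 1 ≤ m_i ≤ m for i = 1, 2, 3. Parametrize the three edges of the reference triangle T̂ affinely by γ₁(t) = (1−t)·ẑ₂ + t·ẑ₃, γ₂(t) = (1−t)·ẑ₃ + t·ẑ₁, γ₃(t) = (1−t)·ẑ₁ + t·ẑ₂ for t ∈ ℝ. Let P̂ be the real vector space of bivariate real polynomials p of total degree at most m such that, for each i = 1, 2, 3, the univariate polynomial t ↦ p(γ_i(t)) has degree at most m_i. Then dim P̂ = (m+1)(m+2)/2 − ((m − m₁) + (m − m₂) + (m − m₃)), which equals 3 + (m₁ − 1) + (m₂ − 1) + (m₃ − 1) + (m−1)(m−2)/2. -/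
namespace Stmt10Aux
open Polynomial Finset
noncomputable section
local notation "s3" => Real.sqrt 3

def zt : Fin 3 → Fin 2 → ℝ := ![![-1, 0], ![1, 0], ![0, s3]]

def E (i : Fin 3) : MvPolynomial (Fin 2) ℝ →ₐ[ℝ] Polynomial ℝ :=
  MvPolynomial.aeval (fun j => C (zt (i + 1) j) + C (zt (i + 2) j - zt (i + 1) j) * X)

def L : Fin 3 → MvPolynomial (Fin 2) ℝ :=
  ![MvPolynomial.C s3 * (1 - MvPolynomial.X 0) - MvPolynomial.X 1,
    MvPolynomial.C s3 * (1 + MvPolynomial.X 0) - MvPolynomial.X 1,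
    MvPolynomial.X 1]

def lam : Fin 3 → MvPolynomial (Fin 2) ℝ :=
  ![MvPolynomial.C s3⁻¹ * MvPolynomial.X 1,
    1 - MvPolynomial.C s3⁻¹ * MvPolynomial.X 1,
    MvPolynomial.C (1/2) * (MvPolynomial.X 0 + 1)]

def cc : Fin 3 → ℝ := ![6, 6, 12]

lemma cc_ne (i : Fin 3) : cc i ≠ 0 := by fin_cases i <;> norm_num [cc]

lemma h3 : (C s3 : Polynomial ℝ) * C s3 = 3 := by
  rw [← C_mul, Real.mul_self_sqrt (by norm_num)]
  exact map_ofNat C 3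

lemma hs3 : (s3 : ℝ) ≠ 0 := by positivity

lemma ELL : ∀ j, E j (L j) = 0 := by
  intro j
  fin_cases j <;> simp [E, L, zt] <;> ring

lemma Elam : ∀ i, E i (lam i) = X := by
  intro i
  fin_cases i
  · simp [E, lam, zt, ← mul_assoc, ← C_mul, inv_mul_cancel₀ hs3]
  · rw [show ((⟨1,by omega⟩ : Fin 3) : Fin 3) = 1 from rfl]
    simp only [E, lam, zt, map_sub, map_one, map_mul, MvPolynomial.aeval_X, MvPolynomial.aeval_C]
    simp [mul_sub, mul_add, ← mul_assoc, ← C_mul, inv_mul_cancel₀ hs3]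
  · simp [E, lam, zt, one_add_one_eq_two,
      show (2 : Polynomial ℝ) = C 2 from (map_ofNat C 2).symm, ← mul_assoc, ← C_mul]

def Q (mi : Fin 3 → ℕ) (i : Fin 3) (k : ℕ) : MvPolynomial (Fin 2) ℝ :=
  L (i + 1) * L (i + 2) * lam i ^ (mi i - 1 + k)

lemma EQ (mi : Fin 3 → ℕ) (i : Fin 3) (k : ℕ) (h : 1 ≤ mi i) :
    E i (Q mi i k) = C (cc i) * (X ^ (mi i + k) - X ^ (mi i + k + 1)) := by
  have hd2 : mi i + k + 1 = (mi i - 1 + k) + 2 := by omega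
  have hd1 : mi i + k = (mi i - 1 + k) + 1 := by omega
  rw [Q, map_mul, map_mul, map_pow, Elam, hd2, hd1]
  generalize (mi i - 1 + k) = d
  fin_cases i
  · simp [E, L, zt, cc, map_ofNat]
    linear_combination (2 * X ^ (d+1) - 2 * X ^ (d+2) : Polynomial ℝ) * h3
  · simp [E, L, zt, cc, map_ofNat]
    linear_combination (2 * X ^ (d+1) - 2 * X ^ (d+2) : Polynomial ℝ) * h3
  · simp [E, L, zt, cc, map_ofNat]
    linear_combination (4 * X ^ (d+1) - 4 * X ^ (d+2) : Polynomial ℝ) * h3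

lemma EQzero (mi : Fin 3 → ℕ) {i j : Fin 3} (hij : j ≠ i) (k : ℕ) :
    E i (Q mi j k) = 0 := by
  have h : i = j + 1 ∨ i = j + 2 := by revert hij; revert i; revert j; decide
  rw [Q, map_mul, map_mul]
  rcases h with h | h <;> rw [h, ELL] <;> ring

open MvPolynomial in
lemma tdL : ∀ j, (L j).totalDegree ≤ 1 := by
  intro j
  fin_cases j <;> simp only [L, Matrix.cons_val_zero, Matrix.cons_val_one, Matrix.head_cons,
    Matrix.cons_val_two, Matrix.tail_cons]
  · apply (totalDegree_sub _ _).trans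
    simp only [max_le_iff]
    refine ⟨(totalDegree_mul _ _).trans ?_, by simp [totalDegree_X]⟩
    simp only [totalDegree_C, Nat.zero_add]
    exact (totalDegree_sub _ _).trans (by simp [totalDegree_X, totalDegree_one])
  · apply (totalDegree_sub _ _).trans
    simp only [max_le_iff]
    refine ⟨(totalDegree_mul _ _).trans ?_, by simp [totalDegree_X]⟩
    simp only [totalDegree_C, Nat.zero_add]
    exact (totalDegree_add _ _).trans (by simp [totalDegree_X, totalDegree_one])
  · simp [totalDegree_X]

open MvPolynomial in
lemma tdlam : ∀ i, (lam i).totalDegree ≤ 1 := by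
  intro i
  fin_cases i <;> simp only [lam, Matrix.cons_val_zero, Matrix.cons_val_one, Matrix.head_cons,
    Matrix.cons_val_two, Matrix.tail_cons]
  · exact (totalDegree_mul _ _).trans (by simp [totalDegree_X, totalDegree_C])
  · apply (totalDegree_sub _ _).trans
    simp only [max_le_iff]
    refine ⟨by simp [totalDegree_one], (totalDegree_mul _ _).trans ?_⟩
    simp [totalDegree_X, totalDegree_C]
  · apply (totalDegree_mul _ _).trans
    simp only [totalDegree_C, Nat.zero_add]
    exact (totalDegree_add _ _).trans (by simp [totalDegree_X, totalDegree_one])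

open MvPolynomial in
lemma tdQ (mi : Fin 3 → ℕ) (i : Fin 3) (k : ℕ) :
    (Q mi i k).totalDegree ≤ 2 + (mi i - 1 + k) := by
  rw [Q]
  apply (totalDegree_mul _ _).trans
  have h1 := (totalDegree_mul (L (i+1)) (L (i+2))).trans
    (Nat.add_le_add (tdL _) (tdL _))
  have h2 := (totalDegree_pow (lam i) (mi i - 1 + k)).trans
    (Nat.mul_le_mul_left _ (tdlam i))
  omega

open MvPolynomial in
lemma natDegree_aeval_le (f : Fin 2 → Polynomial ℝ) (hf : ∀ j, (f j).natDegree ≤ 1)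
    (p : MvPolynomial (Fin 2) ℝ) : ((MvPolynomial.aeval f) p).natDegree ≤ p.totalDegree := by
  rw [MvPolynomial.aeval_def, MvPolynomial.eval₂_eq]
  apply Polynomial.natDegree_sum_le_of_forall_le
  intro d hd
  calc (algebraMap ℝ (Polynomial ℝ) (MvPolynomial.coeff d p) * ∏ i ∈ d.support, f i ^ d i).natDegree
      ≤ (∏ i ∈ d.support, f i ^ d i).natDegree := by
        simpa using Polynomial.natDegree_C_mul_le _ _
    _ ≤ ∑ i ∈ d.support, (f i ^ d i).natDegree := Polynomial.natDegree_prod_le _ _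
    _ ≤ ∑ i ∈ d.support, d i := by
        apply Finset.sum_le_sum
        intro i _
        calc (f i ^ d i).natDegree ≤ d i * (f i).natDegree := Polynomial.natDegree_pow_le
          _ ≤ d i * 1 := Nat.mul_le_mul_left _ (hf i)
          _ = d i := Nat.mul_one _
    _ ≤ p.totalDegree := MvPolynomial.le_totalDegree hd

open MvPolynomial in
lemma natDegree_E_le (i : Fin 3) (p : MvPolynomial (Fin 2) ℝ) :
    ((E i) p).natDegree ≤ p.totalDegree := by
  apply natDegree_aeval_le
  intro j
  apply (Polynomial.natDegree_add_le _ _).trans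
  simp only [natDegree_C, max_le_iff]
  exact ⟨Nat.zero_le _, (natDegree_C_mul_le _ _).trans (by simp [natDegree_X])⟩

open MvPolynomial in
lemma finrank_W (m : ℕ) :
    Module.finrank ℝ (restrictTotalDegree (Fin 2) ℝ m) = (m+1)*(m+2)/2 := by
  have key : ∀ n : Fin 2 →₀ ℕ, (n.sum fun _ e => e) = n 0 + n 1 := by
    intro n
    rw [Finsupp.sum_fintype _ _ (fun _ => rfl), Fin.sum_univ_two]
  let S : Finset ((_ : ℕ) × ℕ) := (range (m+1)).sigma fun a => range (m+1-a)
  have hmem : ∀ a b : ℕ, (⟨a, b⟩ : (_ : ℕ) × ℕ) ∈ S ↔ a + b ≤ m := by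
    intro a b; simp [S, Finset.mem_sigma]; omega
  let e : {n : Fin 2 →₀ ℕ // n ∈ { n | (n.sum fun _ e => e) ≤ m }} ≃ {x // x ∈ S} :=
    { toFun := fun n => ⟨⟨n.1 0, n.1 1⟩, by
        rw [hmem]; have := n.2; simpa [key] using this⟩
      invFun := fun x => ⟨Finsupp.equivFunOnFinite.symm ![x.1.1, x.1.2], by
        have := (hmem x.1.1 x.1.2).1 (by exact x.2)
        simp [key]; omega⟩
      left_inv := fun n => by
        ext i
        fin_cases i <;> simp
      right_inv := fun x => by
        apply Subtype.ext
        rcases x with ⟨⟨a, b⟩, hx⟩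
        simp }
  have b := (MvPolynomial.basisRestrictSupport ℝ
    { n : Fin 2 →₀ ℕ | (n.sum fun _ e => e) ≤ m }).reindex e
  rw [restrictTotalDegree, Module.finrank_eq_card_basis b, Fintype.card_coe]
  have hS : S.card = ∑ a ∈ range (m+1), (m+1-a) := by
    simp [S, Finset.card_sigma]
  rw [hS]
  have h2 : ∑ a ∈ range (m+1), (m+1-a) = ∑ a ∈ range (m+1), (a+1) := by
    rw [← Finset.sum_range_reflect]
    apply Finset.sum_congr rfl
    intro i hi; simp at hi; omega
  rw [h2, Finset.sum_add_distrib, Finset.sum_range_id]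
  simp
  have : (m+1)*(m+2) = (m+1)*m + 2*(m+1) := by ring
  omega

end
end Stmt10Aux
/-- Dimension of the constrained local polynomial space `P̂` (Section 4 of the paper):
polynomials of total degree at most `m` on the reference triangle whose restriction to
the `i`-th edge (affinely parametrized) has degree at most `m_i`. Its dimension is
`(m+1)(m+2)/2 − ((m−m₁)+(m−m₂)+(m−m₃))
  = 3 + (m₁−1)+(m₂−1)+(m₃−1) + (m−1)(m−2)/2`. -/
theorem stmt_10 (m m1 m2 m3 : ℕ)
    (h1 : 1 ≤ m1) (h2 : 1 ≤ m2) (h3 : 1 ≤ m3)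
    (hm1 : m1 ≤ m) (hm2 : m2 ≤ m) (hm3 : m3 ≤ m)
    (zhat : Fin 3 → Fin 2 → ℝ)
    (hz : zhat = ![![-1, 0], ![1, 0], ![0, Real.sqrt 3]])
    (mi : Fin 3 → ℕ) (hmi : mi = ![m1, m2, m3])
    -- `edge i` maps a bivariate polynomial `p` to the univariate polynomial
    -- `t ↦ p(γ_i(t))`, where `γ_i(t) = (1−t)·ẑ_{i+1} + t·ẑ_{i+2}` (indices mod 3).
    (edge : Fin 3 → (MvPolynomial (Fin 2) ℝ →ₐ[ℝ] Polynomial ℝ))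
    (hedge : ∀ i, edge i = MvPolynomial.aeval
      (fun j => Polynomial.C (zhat (i + 1) j)
        + Polynomial.C (zhat (i + 2) j - zhat (i + 1) j) * Polynomial.X))
    (Phat : Submodule ℝ (MvPolynomial (Fin 2) ℝ))
    (hPhat : ∀ p, p ∈ Phat ↔ p.totalDegree ≤ m ∧ ∀ i, (edge i p).natDegree ≤ mi i) :
    Module.finrank ℝ Phat = (m + 1) * (m + 2) / 2 - ((m - m1) + (m - m2) + (m - m3)) ∧
    Module.finrank ℝ Phat
      = 3 + ((m1 - 1) + (m2 - 1) + (m3 - 1)) + (m - 1) * (m - 2) / 2 := by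
  classical
  subst hz
  have hE : ∀ i, edge i = Stmt10Aux.E i := fun i => (hedge i).trans rfl
  have hPhat' : ∀ p, p ∈ Phat ↔ p.totalDegree ≤ m ∧
      ∀ i, ((Stmt10Aux.E i) p).natDegree ≤ mi i := by
    simpa only [hE] using hPhat
  have hmi1 : ∀ i, 1 ≤ mi i := by
    intro i; fin_cases i <;> simp [hmi] <;> assumption
  have hmile : ∀ i, mi i ≤ m := by
    intro i; fin_cases i <;> simp [hmi] <;> assumption
  set W := MvPolynomial.restrictTotalDegree (Fin 2) ℝ m with hW
  set Φ : W →ₗ[ℝ] (∀ i : Fin 3, Fin (m - mi i) → ℝ) := {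
    toFun := fun p i k => ((Stmt10Aux.E i) (p : MvPolynomial (Fin 2) ℝ)).coeff (mi i + 1 + k)
    map_add' := by
      intro x y; funext i k
      show ((Stmt10Aux.E i) (((x : MvPolynomial (Fin 2) ℝ)) + (y : MvPolynomial (Fin 2) ℝ))).coeff _ = _
      rw [map_add, Polynomial.coeff_add]
      rfl
    map_smul' := by
      intro c x; funext i k
      show ((Stmt10Aux.E i) (c • (x : MvPolynomial (Fin 2) ℝ))).coeff _ = _
      rw [map_smul, Polynomial.coeff_smul]
      rfl } with hPhi
  -- kernel identification
  have hker : Phat = (LinearMap.ker Φ).map W.subtype := by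
    ext p
    rw [hPhat']
    constructor
    · rintro ⟨hd, hcoef⟩
      refine ⟨⟨p, (MvPolynomial.mem_restrictTotalDegree _ _ _).mpr hd⟩, ?_, rfl⟩
      simp only [SetLike.mem_coe, LinearMap.mem_ker]
      funext i k
      show ((Stmt10Aux.E i) p).coeff (mi i + 1 + k) = 0
      exact Polynomial.coeff_eq_zero_of_natDegree_lt (lt_of_le_of_lt (hcoef i) (by omega))
    · rintro ⟨⟨q, hq⟩, hq0, rfl⟩
      have hqd : q.totalDegree ≤ m := (MvPolynomial.mem_restrictTotalDegree _ _ _).mp hq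
      refine ⟨hqd, ?_⟩
      intro i
      rw [Polynomial.natDegree_le_iff_coeff_eq_zero]
      intro N hN
      rcases Nat.lt_or_ge m N with h | h
      · exact Polynomial.coeff_eq_zero_of_natDegree_lt
          (lt_of_le_of_lt ((Stmt10Aux.natDegree_E_le i q).trans hqd) h)
      · have hk : N - mi i - 1 < m - mi i := by have := hmile i; omega
        have hthis := congrFun (congrFun (LinearMap.mem_ker.mp hq0) i) ⟨N - mi i - 1, hk⟩
        have : ((Stmt10Aux.E i) q).coeff (mi i + 1 + (N - mi i - 1)) = 0 := hthis
        rwa [show mi i + 1 + (N - mi i - 1) = N by omega] at this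
  -- surjectivity
  have hsurj : Function.Surjective Φ := by
    intro v
    set v' : Fin 3 → ℕ → ℝ := fun i l => if h : l < m - mi i then v i ⟨l, h⟩ else 0 with hv'
    set a : Fin 3 → ℕ → ℝ :=
      fun i k => -(Stmt10Aux.cc i)⁻¹ * ∑ l ∈ Finset.Ico k (m - mi i), v' i l with ha
    set p : MvPolynomial (Fin 2) ℝ :=
      ∑ i : Fin 3, ∑ k ∈ Finset.range (m - mi i), a i k • Stmt10Aux.Q mi i k with hp
    have hpd : p.totalDegree ≤ m := by
      apply MvPolynomial.totalDegree_finsetSum_le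
      intro i _
      apply MvPolynomial.totalDegree_finsetSum_le
      intro k hk
      apply (MvPolynomial.totalDegree_smul_le _ _).trans
      apply (Stmt10Aux.tdQ mi i k).trans
      have := hmile i; have := hmi1 i
      simp only [Finset.mem_range] at hk
      omega
    refine ⟨⟨p, (MvPolynomial.mem_restrictTotalDegree _ _ _).mpr hpd⟩, ?_⟩
    funext i k
    show ((Stmt10Aux.E i) p).coeff (mi i + 1 + k) = v i k
    have hEp : (Stmt10Aux.E i) p =
        ∑ k' ∈ Finset.range (m - mi i),
          a i k' • (Polynomial.C (Stmt10Aux.cc i) *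
            (Polynomial.X ^ (mi i + k') - Polynomial.X ^ (mi i + k' + 1))) := by
      rw [hp, map_sum, Finset.sum_eq_single_of_mem i (Finset.mem_univ i)]
      · rw [map_sum]
        apply Finset.sum_congr rfl
        intro k' _
        rw [map_smul, Stmt10Aux.EQ mi i k' (hmi1 i)]
      · intro j _ hji
        rw [map_sum]
        apply Finset.sum_eq_zero
        intro k' _
        rw [map_smul, Stmt10Aux.EQzero mi hji k', smul_zero]
    rw [hEp, Polynomial.finset_sum_coeff]
    have hterm : ∀ k' ∈ Finset.range (m - mi i),
        (a i k' • (Polynomial.C (Stmt10Aux.cc i) *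
          (Polynomial.X ^ (mi i + k') - Polynomial.X ^ (mi i + k' + 1)))).coeff (mi i + 1 + k)
        = (if k' = (k : ℕ) + 1 then a i k' * Stmt10Aux.cc i else 0)
          - (if k' = (k : ℕ) then a i k' * Stmt10Aux.cc i else 0) := by
      intro k' _
      rw [Polynomial.coeff_smul, Polynomial.coeff_C_mul, Polynomial.coeff_sub,
        Polynomial.coeff_X_pow, Polynomial.coeff_X_pow]
      by_cases hc1 : k' = (k : ℕ) + 1
      · subst hc1
        rw [if_pos (by omega), if_neg (by omega), if_pos rfl, if_neg (by omega)]
        simp [smul_eq_mul]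
      · by_cases hc2 : k' = (k : ℕ)
        · subst hc2
          rw [if_neg (by omega), if_pos (by omega), if_neg hc1, if_pos rfl]
          simp [smul_eq_mul]
        · rw [if_neg (by omega), if_neg (by omega), if_neg hc1, if_neg hc2]
          simp
    rw [Finset.sum_congr rfl hterm, Finset.sum_sub_distrib,
      Finset.sum_ite_eq' (Finset.range (m - mi i)),
      Finset.sum_ite_eq' (Finset.range (m - mi i))]
    have hkmem : (k : ℕ) ∈ Finset.range (m - mi i) := Finset.mem_range.mpr k.2
    rw [if_pos hkmem]
    have hcc := Stmt10Aux.cc_ne i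
    have hvk : v' i (k : ℕ) = v i k := by
      rw [hv']; simp
    by_cases hk1 : (k : ℕ) + 1 ∈ Finset.range (m - mi i)
    · rw [if_pos hk1]
      have hsplit : ∑ l ∈ Finset.Ico (k : ℕ) (m - mi i), v' i l
          = v' i (k : ℕ) + ∑ l ∈ Finset.Ico ((k : ℕ) + 1) (m - mi i), v' i l :=
        Finset.sum_eq_sum_Ico_succ_bot (Finset.mem_range.mp hkmem) _
      rw [ha]
      simp only []
      rw [hsplit, ← hvk]
      field_simp
      ring
    · rw [if_neg hk1]
      have hn : m - mi i = (k : ℕ) + 1 := by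
        simp only [Finset.mem_range] at hk1
        omega
      have hIco : Finset.Ico (k : ℕ) (m - mi i) = {(k : ℕ)} := by
        ext x
        simp only [Finset.mem_Ico, Finset.mem_singleton]
        omega
      rw [ha]
      simp only [hIco, Finset.sum_singleton]
      rw [← hvk]
      field_simp
      ring
  -- rank computation
  have hWfin : Module.finrank ℝ W = (m + 1) * (m + 2) / 2 := Stmt10Aux.finrank_W m
  have hVfin : Module.finrank ℝ (∀ i : Fin 3, Fin (m - mi i) → ℝ)
      = (m - m1) + (m - m2) + (m - m3) := by
    rw [Module.finrank_pi_fintype, Fin.sum_univ_three]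
    simp [Module.finrank_pi, hmi]
  have hrange : LinearMap.range Φ = ⊤ := LinearMap.range_eq_top.mpr hsurj
  have hrn := LinearMap.finrank_range_add_finrank_ker Φ
  rw [hrange, finrank_top] at hrn
  have hfr : Module.finrank ℝ Phat = Module.finrank ℝ (LinearMap.ker Φ) := by
    rw [hker]; exact Submodule.finrank_map_subtype_eq _ _
  have key : (m + 1) * (m + 2) = (m - 1) * (m - 2) + 6 * m := by
    obtain ⟨m', rfl⟩ : ∃ m', m = m' + 1 := ⟨m - 1, by omega⟩
    cases m' with
    | zero => norm_num
    | succ n =>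
      have e1 : n + 1 + 1 - 1 = n + 1 := by omega
      have e2 : n + 1 + 1 - 2 = n := by omega
      rw [e1, e2]; ring
  have hev : Even ((m - 1) * (m - 2)) := by
    rcases Nat.lt_or_ge m 2 with h | h
    · have hz : m - 2 = 0 := by omega
      simp [hz]
    · have h12 : m - 2 + 1 = m - 1 := by omega
      have := Nat.even_mul_succ_self (m - 2)
      rw [h12, mul_comm] at this
      exact this
  obtain ⟨c2, hc2⟩ := hev
  rw [hfr]
  rw [hWfin, hVfin] at hrn
  constructor <;> omega
end
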